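/- arXiv:0906.0676 — 3 statements merged into one kernel-verified Lean document; each statement's English description precedes it below -/
import Mathlib

section
/- If γ^α(F,a,b) < ∞, then the function t ↦ γ^α(F,a,t) is continuous on [a,b]. In particular the mass function is atomless: no single point of the curve carries nonzero mass. -/
open Set
open scoped ENNReal

structure Subdivision (a b : ℝ) where
  k : ℕ
  t : ℕ → ℝ
  first : t 0 = a
  last : t k = b
  mono : ∀ i < k, t i < t (i + 1)

def Subdivision.MeshLE {a b : ℝ} (P : Subdivision a b) (δ : ℝ) : Prop :=
  ∀ i < P.k, P.t (i + 1) - P.t i ≤ δ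

noncomputable def sigmaSum {n : ℕ} (α : ℝ) (w : ℝ → EuclideanSpace ℝ (Fin n))
    {a b : ℝ} (P : Subdivision a b) : ℝ :=
  (∑ i ∈ Finset.range P.k, ‖w (P.t (i + 1)) - w (P.t i)‖ ^ α) / Real.Gamma (α + 1)

noncomputable def gammaDelta {n : ℕ} (α : ℝ) (w : ℝ → EuclideanSpace ℝ (Fin n))
    (a b δ : ℝ) : ℝ≥0∞ :=
  ⨅ (P : Subdivision a b) (_ : P.MeshLE δ), ENNReal.ofReal (sigmaSum α w P)

noncomputable def massFn {n : ℕ} (α : ℝ) (w : ℝ → EuclideanSpace ℝ (Fin n))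
    (a b : ℝ) : ℝ≥0∞ :=
  ⨆ (δ : ℝ) (_ : 0 < δ), gammaDelta α w a b δ

namespace Subdivision

variable {a b : ℝ} {P : Subdivision a b}

theorem t_le_t (P : Subdivision a b) {i j : ℕ} (hij : i ≤ j) (hj : j ≤ P.k) : P.t i ≤ P.t j := by
  induction j with
  | zero =>
    obtain rfl : i = 0 := by omega
    exact le_rfl
  | succ j ih =>
    rcases Nat.eq_or_lt_of_le hij with h | h
    · rw [h]
    · exact (ih (by omega) (by omega)).trans (P.mono j (by omega)).le

theorem le_of_sub (P : Subdivision a b) : a ≤ b := by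
  have := P.t_le_t (i := 0) (j := P.k) (Nat.zero_le _) le_rfl
  rwa [P.first, P.last] at this

theorem t_mem (P : Subdivision a b) {i : ℕ} (hi : i ≤ P.k) : P.t i ∈ Icc a b := by
  constructor
  · have := P.t_le_t (i := 0) (j := i) (Nat.zero_le _) hi
    rwa [P.first] at this
  · have := P.t_le_t (i := i) (j := P.k) hi le_rfl
    rwa [P.last] at this

/-- the trivial subdivision of a degenerate interval -/
def triv (x : ℝ) : Subdivision x x :=
  ⟨0, fun _ => x, rfl, rfl, by omega⟩

theorem triv_meshLE (x δ : ℝ) : (triv x).MeshLE δ := by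
  intro i hi; simp [triv] at hi

end Subdivision

/-- concatenation of subdivisions -/
def concat {a t b : ℝ} (P : Subdivision a t) (Q : Subdivision t b) : Subdivision a b where
  k := P.k + Q.k
  t := fun i => if i < P.k then P.t i else Q.t (i - P.k)
  first := by
    by_cases h : 0 < P.k
    · simp [h, P.first]
    · have hk : P.k = 0 := by omega
      have h0 : P.t 0 = t := hk ▸ P.last
      have : Q.t 0 = P.t 0 := by rw [Q.first, h0]
      simp [h, this, P.first]
  last := by
    have h : ¬ (P.k + Q.k < P.k) := by omega
    simp only [h, if_false, Nat.add_sub_cancel_left, Q.last]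
  mono := by
    intro i hi
    by_cases h1 : i + 1 < P.k
    · simp only [show i < P.k by omega, if_pos, h1, if_true]
      exact P.mono i (by omega)
    · by_cases h2 : i < P.k
      · have hik : i + 1 = P.k := by omega
        simp only [h2, if_true, h1, if_false]
        have : Q.t (i + 1 - P.k) = P.t (i + 1) := by
          have h0 : P.t (i + 1) = t := by rw [hik]; exact P.last
          rw [show i + 1 - P.k = 0 by omega, Q.first, h0]
        rw [this]
        exact P.mono i (by omega)
      · simp only [h2, if_false, h1, if_false]
        have : i + 1 - P.k = (i - P.k) + 1 := by omega
        rw [this]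
        exact Q.mono (i - P.k) (by omega)

theorem concat_t_left {a t b : ℝ} (P : Subdivision a t) (Q : Subdivision t b)
    {i : ℕ} (hi : i ≤ P.k) : (concat P Q).t i = P.t i := by
  rcases lt_or_eq_of_le hi with h | h
  · simp [concat, h]
  · subst h
    have h : ¬ (P.k < P.k) := lt_irrefl _
    simp only [concat, h, if_false, Nat.sub_self, Q.first, ← P.last]

theorem concat_t_right {a t b : ℝ} (P : Subdivision a t) (Q : Subdivision t b)
    (j : ℕ) : (concat P Q).t (P.k + j) = Q.t j := by
  have h : ¬ (P.k + j < P.k) := by omega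
  simp only [concat, h, if_false, Nat.add_sub_cancel_left]

theorem concat_meshLE {a t b δ : ℝ} {P : Subdivision a t} {Q : Subdivision t b}
    (hP : P.MeshLE δ) (hQ : Q.MeshLE δ) : (concat P Q).MeshLE δ := by
  intro i hi
  by_cases h2 : i < P.k
  · rw [concat_t_left P Q (by omega : i + 1 ≤ P.k), concat_t_left P Q h2.le]
    exact hP i h2
  · have hi' : i - P.k < Q.k := by
      simp only [concat] at hi; omega
    have v1 : (concat P Q).t (i + 1) = Q.t (i - P.k + 1) := by
      rw [show i + 1 = P.k + (i - P.k + 1) by omega, concat_t_right]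
    have v2 : (concat P Q).t i = Q.t (i - P.k) := by
      have : (concat P Q).t i = (concat P Q).t (P.k + (i - P.k)) := by congr 1; omega
      rw [this, concat_t_right]
    rw [v1, v2]
    exact hQ _ hi'

theorem sigmaSum_concat {n : ℕ} (α : ℝ) (w : ℝ → EuclideanSpace ℝ (Fin n))
    {a t b : ℝ} (P : Subdivision a t) (Q : Subdivision t b) :
    sigmaSum α w (concat P Q) = sigmaSum α w P + sigmaSum α w Q := by
  unfold sigmaSum
  rw [← add_div]
  congr 1
  have hk : (concat P Q).k = P.k + Q.k := rfl
  rw [hk, Finset.sum_range_add]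
  congr 1
  · apply Finset.sum_congr rfl
    intro i hi
    rw [Finset.mem_range] at hi
    rw [concat_t_left P Q (by omega : i + 1 ≤ P.k), concat_t_left P Q (by omega : i ≤ P.k)]
  · apply Finset.sum_congr rfl
    intro i hi
    rw [show P.k + i + 1 = P.k + (i + 1) by omega, concat_t_right, concat_t_right]
theorem Real.Gamma_add_one_pos {α : ℝ} (hα : 0 ≤ α) : 0 < Real.Gamma (α + 1) :=
  Real.Gamma_pos_of_pos (by linarith)

theorem div_add_div_le_div_add_div {Γ x y z c : ℝ} (hΓ : 0 < Γ) (h : x + y ≤ z + c) :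
    x / Γ + y / Γ ≤ z / Γ + c / Γ := by
  rw [← add_div, ← add_div]
  gcongr

theorem exists_split {n : ℕ} {α : ℝ} (hα : 0 ≤ α) (w : ℝ → EuclideanSpace ℝ (Fin n))
    {s u t δ ε : ℝ} (hε : 0 ≤ ε) (P : Subdivision s u) (hP : P.MeshLE δ)
    (ht : t ∈ Icc s u)
    (hosc : ∀ p ∈ Icc s u, ∀ q ∈ Icc s u, |p - q| ≤ δ → ‖w p - w q‖ ≤ ε) :
    ∃ (P₁ : Subdivision s t) (P₂ : Subdivision t u), P₁.MeshLE δ ∧ P₂.MeshLE δ ∧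
      sigmaSum α w P₁ + sigmaSum α w P₂ ≤ sigmaSum α w P + 2 * ε ^ α / Real.Gamma (α + 1) := by
  classical
  have hΓ : 0 < Real.Gamma (α + 1) := Real.Gamma_add_one_pos hα
  have hεα : 0 ≤ 2 * ε ^ α := by positivity
  set F : ℕ → ℝ := fun i => ‖w (P.t (i + 1)) - w (P.t i)‖ ^ α with hF
  set j := Nat.findGreatest (fun i => P.t i ≤ t) P.k with hj
  have hj_le : j ≤ P.k := by
    rw [hj]; exact Nat.findGreatest_le _
  have hjt : P.t j ≤ t := by
    rw [hj]
    refine Nat.findGreatest_spec (P := fun i => P.t i ≤ t) (Nat.zero_le _) ?_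
    show P.t 0 ≤ t
    rw [P.first]; exact ht.1
  have hgt : ∀ m, j < m → m ≤ P.k → t < P.t m := by
    intro m h1 h2
    rw [hj] at h1
    exact lt_of_not_ge (Nat.findGreatest_is_greatest (P := fun i => P.t i ≤ t) h1 h2)
  rcases eq_or_lt_of_le hjt with h | h
  · -- clean split at existing point
    refine ⟨⟨j, P.t, P.first, h, fun i hi => P.mono i (by omega)⟩,
      ⟨P.k - j, fun i => P.t (j + i), by simpa using h,
        by
          show P.t (j + (P.k - j)) = u
          rw [show j + (P.k - j) = P.k from by omega]; exact P.last,
        fun i hi => by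
          have hi' : i < P.k - j := hi
          have := P.mono (j + i) (by omega)
          rwa [show j + i + 1 = j + (i + 1) by omega] at this⟩,
      fun i hi => hP i (lt_of_lt_of_le hi hj_le),
      fun i hi => by
        have hi' : i < P.k - j := hi
        have := hP (j + i) (by omega)
        show P.t (j + (i + 1)) - P.t (j + i) ≤ δ
        rwa [show j + (i + 1) = j + i + 1 by omega],
      ?_⟩
    show (∑ i ∈ Finset.range j, F i) / Real.Gamma (α + 1)
        + (∑ i ∈ Finset.range (P.k - j), F (j + i)) / Real.Gamma (α + 1)
        ≤ (∑ i ∈ Finset.range P.k, F i) / Real.Gamma (α + 1) + 2 * ε ^ α / Real.Gamma (α + 1)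
    apply div_add_div_le_div_add_div hΓ
    have key : (∑ i ∈ Finset.range j, F i) + (∑ i ∈ Finset.range (P.k - j), F (j + i))
        = ∑ i ∈ Finset.range P.k, F i := by
      conv_rhs => rw [show P.k = j + (P.k - j) from by omega, Finset.sum_range_add]
    rw [key]
    linarith
  · -- t lies strictly inside the segment (j, j+1)
    have hjk : j < P.k := by
      by_contra hc
      have hje : j = P.k := by omega
      have hju : P.t j = u := by rw [hje]; exact P.last
      exact absurd (ht.2.trans_eq hju.symm) (not_le.mpr h)
    have htj1 : t < P.t (j + 1) := hgt (j + 1) (by omega) (by omega)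
    have hmesh_j : P.t (j + 1) - P.t j ≤ δ := hP j hjk
    have htmem : t ∈ Icc s u := ht
    have hbound1 : ‖w t - w (P.t j)‖ ≤ ε := by
      apply hosc t ht (P.t j) (P.t_mem hj_le)
      rw [abs_of_nonneg (by linarith)]
      linarith
    have hbound2 : ‖w (P.t (j + 1)) - w t‖ ≤ ε := by
      apply hosc (P.t (j + 1)) (P.t_mem (by omega)) t ht
      rw [abs_of_nonneg (by linarith)]
      linarith
    have hb1 : ‖w t - w (P.t j)‖ ^ α ≤ ε ^ α :=
      Real.rpow_le_rpow (norm_nonneg _) hbound1 hα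
    have hb2 : ‖w (P.t (j + 1)) - w t‖ ^ α ≤ ε ^ α :=
      Real.rpow_le_rpow (norm_nonneg _) hbound2 hα
    refine ⟨⟨j + 1, fun i => if i ≤ j then P.t i else t, by simp [P.first],
        by simp,
        fun i hi => by
          have hi' : i < j + 1 := hi
          by_cases h1 : i + 1 ≤ j
          · simp only [show i ≤ j by omega, if_pos, h1, if_true]
            exact P.mono i (by omega)
          · have hieq : i = j := by omega
            simp only [show i ≤ j by omega, if_pos, h1, if_false]
            rw [hieq]
            exact h⟩,
      ⟨P.k - j, fun i => if i = 0 then t else P.t (j + i), by simp,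
        by
          show (if P.k - j = 0 then t else P.t (j + (P.k - j))) = u
          rw [if_neg (by omega), show j + (P.k - j) = P.k from by omega]
          exact P.last,
        fun i hi => by
          have hi' : i < P.k - j := hi
          by_cases h0 : i = 0
          · subst h0
            simp only [if_pos rfl, if_neg (by omega : ¬ (0 + 1 = 0))]
            exact htj1
          · simp only [if_neg h0, if_neg (by omega : ¬ (i + 1 = 0))]
            have := P.mono (j + i) (by omega)
            rwa [show j + i + 1 = j + (i + 1) by omega] at this⟩,
      ?_, ?_, ?_⟩
    · intro i hi
      have hi' : i < j + 1 := hi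
      by_cases h1 : i + 1 ≤ j
      · show (if i + 1 ≤ j then P.t (i + 1) else t) - (if i ≤ j then P.t i else t) ≤ δ
        rw [if_pos h1, if_pos (by omega : i ≤ j)]
        exact hP i (by omega)
      · have hieq : i = j := by omega
        show (if i + 1 ≤ j then P.t (i + 1) else t) - (if i ≤ j then P.t i else t) ≤ δ
        rw [if_neg h1, if_pos (by omega : i ≤ j), hieq]
        linarith
    · intro i hi
      have hi' : i < P.k - j := hi
      by_cases h0 : i = 0
      · subst h0
        show (if 0 + 1 = 0 then t else P.t (j + (0 + 1))) - (if (0:ℕ) = 0 then t else P.t (j + 0)) ≤ δ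
        rw [if_neg (by omega : ¬ (0 + 1 = 0)), if_pos rfl]
        have : j + (0 + 1) = j + 1 := by omega
        rw [this]
        linarith
      · show (if i + 1 = 0 then t else P.t (j + (i + 1))) - (if i = 0 then t else P.t (j + i)) ≤ δ
        rw [if_neg (by omega : ¬ (i + 1 = 0)), if_neg h0]
        have := hP (j + i) (by omega)
        rwa [show j + (i + 1) = j + i + 1 by omega]
    · -- the sum estimate
      show (∑ i ∈ Finset.range (j + 1),
            ‖w (if i + 1 ≤ j then P.t (i + 1) else t) - w (if i ≤ j then P.t i else t)‖ ^ α)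
            / Real.Gamma (α + 1)
          + (∑ i ∈ Finset.range (P.k - j),
            ‖w (if i + 1 = 0 then t else P.t (j + (i + 1))) - w (if i = 0 then t else P.t (j + i))‖ ^ α)
            / Real.Gamma (α + 1)
          ≤ (∑ i ∈ Finset.range P.k, F i) / Real.Gamma (α + 1) + 2 * ε ^ α / Real.Gamma (α + 1)
      apply div_add_div_le_div_add_div hΓ
      have e1 : (∑ i ∈ Finset.range (j + 1),
            ‖w (if i + 1 ≤ j then P.t (i + 1) else t) - w (if i ≤ j then P.t i else t)‖ ^ α)
          = (∑ i ∈ Finset.range j, F i) + ‖w t - w (P.t j)‖ ^ α := by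
        rw [Finset.sum_range_succ]
        congr 1
        · apply Finset.sum_congr rfl
          intro i hi
          rw [Finset.mem_range] at hi
          rw [if_pos (by omega : i + 1 ≤ j), if_pos (by omega : i ≤ j)]
        · rw [if_neg (by omega : ¬ (j + 1 ≤ j)), if_pos (le_refl j)]
      have e2 : (∑ i ∈ Finset.range (P.k - j),
            ‖w (if i + 1 = 0 then t else P.t (j + (i + 1))) - w (if i = 0 then t else P.t (j + i))‖ ^ α)
          = (∑ i ∈ Finset.range (P.k - j - 1), F (j + 1 + i))
            + ‖w (P.t (j + 1)) - w t‖ ^ α := by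
        rw [show P.k - j = (P.k - j - 1) + 1 from by omega, Finset.sum_range_succ']
        congr 1
        · apply Finset.sum_congr rfl
          intro i hi
          rw [Finset.mem_range] at hi
          rw [if_neg (by omega : ¬ (i + 1 + 1 = 0)), if_neg (by omega : ¬ (i + 1 = 0))]
          show ‖w (P.t (j + (i + 1 + 1))) - w (P.t (j + (i + 1)))‖ ^ α = F (j + 1 + i)
          simp only [hF]
          rw [show j + (i + 1 + 1) = j + 1 + i + 1 from by omega,
            show j + (i + 1) = j + 1 + i from by omega]
      have e3 : (∑ i ∈ Finset.range P.k, F i)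
          = ((∑ i ∈ Finset.range j, F i) + F j) + ∑ i ∈ Finset.range (P.k - j - 1), F (j + 1 + i) := by
        conv_lhs => rw [show P.k = (j + 1) + (P.k - j - 1) from by omega, Finset.sum_range_add,
          Finset.sum_range_succ]
      rw [e1, e2, e3]
      have hFj : 0 ≤ F j := by rw [hF]; positivity
      linarith
theorem rpow_le_rpow_add_of_le {α D p q c : ℝ} (hα : 1 ≤ α) (hq : 0 ≤ q) (hp : 0 ≤ p)
    (hc : 0 ≤ c) (hpqc : p ≤ q + c) (hpD : p ≤ D) (hqD : q ≤ D) :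
    p ^ α ≤ q ^ α + α * D ^ (α - 1) * c := by
  have hD : 0 ≤ D := hq.trans hqD
  have hK : 0 ≤ α * D ^ (α - 1) * c := by positivity
  rcases le_or_gt p q with hpq | hpq
  · have := Real.rpow_le_rpow hp hpq (by linarith : (0:ℝ) ≤ α)
    linarith
  · obtain ⟨ξ, hξ, hslope⟩ := exists_hasDerivAt_eq_slope (fun x => x ^ α)
      (fun x => α * x ^ (α - 1)) hpq
      (fun x _ => (Real.continuousAt_rpow_const x α (Or.inr (by linarith))).continuousWithinAt)
      (fun x _ => Real.hasDerivAt_rpow_const (Or.inr hα))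
    have hξ0 : 0 ≤ ξ := hq.trans hξ.1.le
    have hξD : ξ ^ (α - 1) ≤ D ^ (α - 1) :=
      Real.rpow_le_rpow hξ0 (hξ.2.le.trans hpD) (by linarith)
    have hne : p - q ≠ 0 := by linarith
    have h1 : p ^ α - q ^ α = α * ξ ^ (α - 1) * (p - q) := by
      rw [hslope]
      field_simp
    have h2 : α * ξ ^ (α - 1) * (p - q) ≤ α * D ^ (α - 1) * c := by
      have hα0 : (0:ℝ) ≤ α := by linarith
      have step1 : α * ξ ^ (α - 1) ≤ α * D ^ (α - 1) :=
        mul_le_mul_of_nonneg_left hξD hα0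
      have step2 : p - q ≤ c := by linarith
      have hξnn : 0 ≤ α * ξ ^ (α - 1) := by positivity
      calc α * ξ ^ (α - 1) * (p - q) ≤ α * D ^ (α - 1) * (p - q) :=
            mul_le_mul_of_nonneg_right step1 (by linarith)
        _ ≤ α * D ^ (α - 1) * c := mul_le_mul_of_nonneg_left step2 (by positivity)
    linarith

theorem norm_rpow_tri {E : Type*} [NormedAddCommGroup E] {α D : ℝ} (hα : 1 ≤ α)
    (u v : E) (hu : ‖u‖ ≤ D) (hv : ‖v‖ ≤ D) :
    ‖u‖ ^ α ≤ ‖v‖ ^ α + α * D ^ (α - 1) * ‖u - v‖ := by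
  apply rpow_le_rpow_add_of_le hα (norm_nonneg _) (norm_nonneg _) (norm_nonneg _) ?_ hu hv
  calc ‖u‖ = ‖v + (u - v)‖ := by congr 1; abel
    _ ≤ ‖v‖ + ‖u - v‖ := norm_add_le _ _

theorem exists_moveR {n : ℕ} {α : ℝ} (hα : 1 ≤ α) (w : ℝ → EuclideanSpace ℝ (Fin n))
    {a x t δ D : ℝ} (hδ : 0 ≤ δ) (hxt : x ≤ t)
    (hD : ∀ p ∈ Icc a t, ∀ q ∈ Icc a t, ‖w p - w q‖ ≤ D)
    (P : Subdivision a x) (hP : P.MeshLE δ) :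
    ∃ Q : Subdivision a t, Q.MeshLE (δ + (t - x)) ∧
      sigmaSum α w Q ≤ sigmaSum α w P
        + α * D ^ (α - 1) * ‖w t - w x‖ / Real.Gamma (α + 1) := by
  have hax : a ≤ x := P.le_of_sub
  have hΓ : 0 < Real.Gamma (α + 1) := Real.Gamma_add_one_pos (by linarith)
  have hat : a ≤ t := hax.trans hxt
  have hD0 : 0 ≤ D := by
    have := hD a ⟨le_rfl, hat⟩ a ⟨le_rfl, hat⟩
    simp at this
    linarith [norm_nonneg (w a - w a), this]
  have hKnn : 0 ≤ α * D ^ (α - 1) * ‖w t - w x‖ / Real.Gamma (α + 1) := by positivity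
  rcases eq_or_lt_of_le hxt with heq | hlt
  · subst heq
    refine ⟨P, fun i hi => by have := hP i hi; linarith, by linarith⟩
  · by_cases hk : P.k = 0
    · have h2 : P.t 0 = x := by rw [← hk]; exact P.last
      have hax' : a = x := P.first.symm.trans h2
      refine ⟨⟨1, fun i => if i = 0 then a else t, if_pos rfl, if_neg one_ne_zero, ?_⟩, ?_, ?_⟩
      · intro i hi
        have : i = 0 := by omega
        subst this
        simp only [if_pos rfl, if_neg one_ne_zero]
        rw [hax']; exact hlt
      · intro i hi
        have hi' : i < 1 := hi
        have : i = 0 := by omega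
        subst this
        show (if (0:ℕ) + 1 = 0 then a else t) - (if (0:ℕ) = 0 then a else t) ≤ δ + (t - x)
        rw [if_neg (by omega : ¬ ((0:ℕ) + 1 = 0)), if_pos rfl, hax']
        linarith
      · show (∑ i ∈ Finset.range 1,
            ‖w (if i + 1 = 0 then a else t) - w (if i = 0 then a else t)‖ ^ α) / Real.Gamma (α + 1)
            ≤ _
        rw [Finset.sum_range_one, if_neg (by omega : ¬ ((0:ℕ) + 1 = 0)), if_pos rfl]
        have hwa : w a = w x := by rw [hax']
        rw [hwa]
        have hσP : sigmaSum α w P = 0 := by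
          unfold sigmaSum
          rw [hk]
          simp
        rw [hσP, zero_add]
        apply div_le_div_of_nonneg_right ?_ hΓ.le
        have h0 : ‖w t - w x‖ ^ α ≤ (0:ℝ) ^ α + α * D ^ (α - 1) * ‖w t - w x‖ := by
          apply rpow_le_rpow_add_of_le hα le_rfl (norm_nonneg _) (norm_nonneg _)
            (by simp) (hD t ⟨hat, le_rfl⟩ x ⟨hax, hxt⟩) hD0
        rw [Real.zero_rpow (by linarith : α ≠ 0)] at h0
        linarith
    · -- replace the last point of P by t
      have hk1 : 1 ≤ P.k := by omega
      refine ⟨⟨P.k, fun i => if i = P.k then t else P.t i,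
          (if_neg (by omega)).trans P.first, if_pos rfl, ?_⟩, ?_, ?_⟩
      · intro i hi
        show (if i = P.k then t else P.t i) < (if i + 1 = P.k then t else P.t (i + 1))
        by_cases h1 : i + 1 = P.k
        · rw [if_pos h1, if_neg (by omega)]
          have : P.t i < x := by
            have h2 := P.mono i hi
            have h3 : P.t (i + 1) ≤ x := by
              have h4 : P.t (i + 1) ≤ P.t P.k := P.t_le_t (by omega) le_rfl
              rwa [P.last] at h4
            linarith
          linarith
        · rw [if_neg h1, if_neg (by omega)]
          exact P.mono i hi
      · intro i hi
        have hi' : i < P.k := hi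
        by_cases h1 : i + 1 = P.k
        · show (if i + 1 = P.k then t else P.t (i + 1)) - (if i = P.k then t else P.t i) ≤ δ + (t - x)
          rw [if_pos h1, if_neg (by omega)]
          have h3 : P.t (i + 1) = x := by rw [h1, P.last]
          have := hP i hi'
          linarith
        · show (if i + 1 = P.k then t else P.t (i + 1)) - (if i = P.k then t else P.t i) ≤ δ + (t - x)
          rw [if_neg h1, if_neg (by omega)]
          have := hP i hi'
          linarith
      · show (∑ i ∈ Finset.range P.k,
            ‖w (if i + 1 = P.k then t else P.t (i + 1)) - w (if i = P.k then t else P.t i)‖ ^ α)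
            / Real.Gamma (α + 1) ≤ _
        unfold sigmaSum
        rw [← add_div]
        apply div_le_div_of_nonneg_right ?_ hΓ.le
        have hsplit : ∀ f : ℕ → ℝ, ∑ i ∈ Finset.range P.k, f i
            = (∑ i ∈ Finset.range (P.k - 1), f i) + f (P.k - 1) := by
          intro f
          conv_lhs => rw [show P.k = (P.k - 1) + 1 from by omega, Finset.sum_range_succ]
        rw [hsplit, hsplit]
        have hsame : ∀ i ∈ Finset.range (P.k - 1),
            ‖w (if i + 1 = P.k then t else P.t (i + 1)) - w (if i = P.k then t else P.t i)‖ ^ α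
            = ‖w (P.t (i + 1)) - w (P.t i)‖ ^ α := by
          intro i hi
          rw [Finset.mem_range] at hi
          rw [if_neg (by omega), if_neg (by omega)]
        rw [Finset.sum_congr rfl hsame]
        have hlastQ : (if P.k - 1 + 1 = P.k then t else P.t (P.k - 1 + 1)) = t :=
          if_pos (by omega)
        have hlastQ2 : (if P.k - 1 = P.k then t else P.t (P.k - 1)) = P.t (P.k - 1) :=
          if_neg (by omega)
        rw [hlastQ, hlastQ2]
        have hxlast : P.t (P.k - 1 + 1) = x := by
          rw [show P.k - 1 + 1 = P.k from by omega]; exact P.last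
        rw [hxlast]
        have hmemlast : P.t (P.k - 1) ∈ Icc a t := by
          have := P.t_mem (i := P.k - 1) (by omega)
          exact ⟨this.1, this.2.trans hxt⟩
        have hkey : ‖w t - w (P.t (P.k - 1))‖ ^ α
            ≤ ‖w x - w (P.t (P.k - 1))‖ ^ α + α * D ^ (α - 1) * ‖w t - w x‖ := by
          have := norm_rpow_tri hα (w t - w (P.t (P.k - 1))) (w x - w (P.t (P.k - 1)))
            (hD t ⟨hat, le_rfl⟩ _ hmemlast) (hD x ⟨hax, hxt⟩ _ hmemlast)
          rwa [show (w t - w (P.t (P.k - 1))) - (w x - w (P.t (P.k - 1))) = w t - w x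
            from by abel] at this
        linarith

theorem exists_moveL {n : ℕ} {α : ℝ} (hα : 1 ≤ α) (w : ℝ → EuclideanSpace ℝ (Fin n))
    {s x b δ D : ℝ} (hδ : 0 ≤ δ) (hsx : s ≤ x)
    (hD : ∀ p ∈ Icc s b, ∀ q ∈ Icc s b, ‖w p - w q‖ ≤ D)
    (P : Subdivision x b) (hP : P.MeshLE δ) :
    ∃ Q : Subdivision s b, Q.MeshLE (δ + (x - s)) ∧
      sigmaSum α w Q ≤ sigmaSum α w P
        + α * D ^ (α - 1) * ‖w x - w s‖ / Real.Gamma (α + 1) := by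
  have hxb : x ≤ b := P.le_of_sub
  have hΓ : 0 < Real.Gamma (α + 1) := Real.Gamma_add_one_pos (by linarith)
  have hsb : s ≤ b := hsx.trans hxb
  have hD0 : 0 ≤ D := by
    have := hD s ⟨le_rfl, hsb⟩ s ⟨le_rfl, hsb⟩
    simp at this
    linarith [norm_nonneg (w s - w s), this]
  have hKnn : 0 ≤ α * D ^ (α - 1) * ‖w x - w s‖ / Real.Gamma (α + 1) := by positivity
  rcases eq_or_lt_of_le hsx with heq | hlt
  · subst heq
    refine ⟨P, fun i hi => by have := hP i hi; linarith, by linarith⟩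
  · by_cases hk : P.k = 0
    · have h2 : P.t 0 = b := by rw [← hk]; exact P.last
      have hxb' : x = b := P.first.symm.trans h2
      refine ⟨⟨1, fun i => if i = 0 then s else b, if_pos rfl, if_neg one_ne_zero, ?_⟩, ?_, ?_⟩
      · intro i hi
        have : i = 0 := by omega
        subst this
        simp only [if_pos rfl, if_neg one_ne_zero]
        rw [← hxb']; exact hlt
      · intro i hi
        have hi' : i < 1 := hi
        have : i = 0 := by omega
        subst this
        show (if (0:ℕ) + 1 = 0 then s else b) - (if (0:ℕ) = 0 then s else b) ≤ δ + (x - s)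
        rw [if_neg (by omega : ¬ ((0:ℕ) + 1 = 0)), if_pos rfl, ← hxb']
        linarith
      · show (∑ i ∈ Finset.range 1,
            ‖w (if i + 1 = 0 then s else b) - w (if i = 0 then s else b)‖ ^ α) / Real.Gamma (α + 1)
            ≤ _
        rw [Finset.sum_range_one, if_neg (by omega : ¬ ((0:ℕ) + 1 = 0)), if_pos rfl]
        have hwb : w b = w x := by rw [hxb']
        rw [hwb]
        have hσP : sigmaSum α w P = 0 := by
          unfold sigmaSum
          rw [hk]
          simp
        rw [hσP, zero_add]
        apply div_le_div_of_nonneg_right ?_ hΓ.le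
        have h0 : ‖w x - w s‖ ^ α ≤ (0:ℝ) ^ α + α * D ^ (α - 1) * ‖w x - w s‖ := by
          apply rpow_le_rpow_add_of_le hα le_rfl (norm_nonneg _) (norm_nonneg _)
            (by simp) (hD x ⟨hsx, hxb⟩ s ⟨le_rfl, hsb⟩) hD0
        rw [Real.zero_rpow (by linarith : α ≠ 0)] at h0
        linarith
    · -- replace the first point of P by s
      have hk1 : 1 ≤ P.k := by omega
      refine ⟨⟨P.k, fun i => if i = 0 then s else P.t i, if_pos rfl,
          (if_neg (by omega)).trans P.last, ?_⟩, ?_, ?_⟩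
      · intro i hi
        show (if i = 0 then s else P.t i) < (if i + 1 = 0 then s else P.t (i + 1))
        by_cases h0 : i = 0
        · subst h0
          rw [if_pos rfl, if_neg (by omega)]
          have h1 : x < P.t (0 + 1) := by
            have := P.mono 0 (by omega)
            rwa [P.first] at this
          linarith
        · rw [if_neg h0, if_neg (by omega)]
          exact P.mono i hi
      · intro i hi
        have hi' : i < P.k := hi
        show (if i + 1 = 0 then s else P.t (i + 1)) - (if i = 0 then s else P.t i) ≤ δ + (x - s)
        by_cases h0 : i = 0
        · subst h0
          rw [if_neg (by omega : ¬ (0 + 1 = 0)), if_pos rfl]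
          have := hP 0 (by omega)
          rw [P.first] at this
          linarith
        · rw [if_neg (by omega), if_neg h0]
          have := hP i hi'
          linarith
      · show (∑ i ∈ Finset.range P.k,
            ‖w (if i + 1 = 0 then s else P.t (i + 1)) - w (if i = 0 then s else P.t i)‖ ^ α)
            / Real.Gamma (α + 1) ≤ _
        unfold sigmaSum
        rw [← add_div]
        apply div_le_div_of_nonneg_right ?_ hΓ.le
        have hsplit : ∀ f : ℕ → ℝ, ∑ i ∈ Finset.range P.k, f i
            = (∑ i ∈ Finset.range (P.k - 1), f (i + 1)) + f 0 := by
          intro f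
          conv_lhs => rw [show P.k = (P.k - 1) + 1 from by omega, Finset.sum_range_succ']
        rw [hsplit, hsplit]
        have hsame : ∀ i ∈ Finset.range (P.k - 1),
            ‖w (if i + 1 + 1 = 0 then s else P.t (i + 1 + 1)) - w (if i + 1 = 0 then s else P.t (i + 1))‖ ^ α
            = ‖w (P.t (i + 1 + 1)) - w (P.t (i + 1))‖ ^ α := by
          intro i hi
          rw [if_neg (by omega), if_neg (by omega)]
        rw [Finset.sum_congr rfl hsame]
        have hlastQ : (if (0:ℕ) + 1 = 0 then s else P.t (0 + 1)) = P.t 1 := by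
          rw [if_neg (by omega : ¬ ((0:ℕ) + 1 = 0))]
        have hlastQ2 : (if (0:ℕ) = 0 then s else P.t 0) = s := if_pos rfl
        rw [hlastQ, hlastQ2]
        have hfirst : P.t (0 + 1) = P.t 1 := rfl
        rw [P.first]
        have hmem1 : P.t 1 ∈ Icc s b := by
          have := P.t_mem (i := 1) (by omega)
          exact ⟨hsx.trans this.1, this.2⟩
        have hkey : ‖w (P.t 1) - w s‖ ^ α
            ≤ ‖w (P.t 1) - w x‖ ^ α + α * D ^ (α - 1) * ‖w x - w s‖ := by
          have := norm_rpow_tri hα (w (P.t 1) - w s) (w (P.t 1) - w x)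
            (hD _ hmem1 s ⟨le_rfl, hsb⟩) (hD _ hmem1 x ⟨hsx, hxb⟩)
          rwa [show (w (P.t 1) - w s) - (w (P.t 1) - w x) = w x - w s
            from by abel] at this
        linarith
theorem gammaDelta_le_ofReal {n : ℕ} {α : ℝ} (w : ℝ → EuclideanSpace ℝ (Fin n))
    {x y δ : ℝ} (P : Subdivision x y) (hP : P.MeshLE δ) :
    gammaDelta α w x y δ ≤ ENNReal.ofReal (sigmaSum α w P) := by
  apply iInf_le_of_le P
  exact iInf_le _ hP

theorem sigmaSum_nonneg {n : ℕ} {α : ℝ} (hα : 0 ≤ α) (w : ℝ → EuclideanSpace ℝ (Fin n))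
    {a b : ℝ} (P : Subdivision a b) : 0 ≤ sigmaSum α w P := by
  apply div_nonneg ?_ (Real.Gamma_add_one_pos hα).le
  apply Finset.sum_nonneg
  intro i _
  exact Real.rpow_nonneg (norm_nonneg _) α

theorem gammaDelta_antitone {n : ℕ} {α : ℝ} (w : ℝ → EuclideanSpace ℝ (Fin n))
    {x y δ δ' : ℝ} (h : δ ≤ δ') : gammaDelta α w x y δ' ≤ gammaDelta α w x y δ :=
  le_iInf₂ fun P hP => iInf₂_le P fun i hi => (hP i hi).trans h

theorem gammaDelta_le_massFn {n : ℕ} {α : ℝ} (w : ℝ → EuclideanSpace ℝ (Fin n))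
    {x y δ : ℝ} (hδ : 0 < δ) : gammaDelta α w x y δ ≤ massFn α w x y :=
  le_iSup₂ (f := fun δ (_ : 0 < δ) => gammaDelta α w x y δ) δ hδ

theorem massFn_self {n : ℕ} (α : ℝ) (w : ℝ → EuclideanSpace ℝ (Fin n)) (x : ℝ) :
    massFn α w x x = 0 := by
  refine le_antisymm (iSup₂_le fun δ hδ => ?_) (zero_le)
  have h1 : gammaDelta α w x x δ ≤ ENNReal.ofReal (sigmaSum α w (Subdivision.triv x)) :=
    gammaDelta_le_ofReal w _ (Subdivision.triv_meshLE x δ)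
  have h2 : sigmaSum α w (Subdivision.triv x) = 0 := by
    unfold sigmaSum Subdivision.triv
    simp
  rw [h2] at h1
  simpa using h1

theorem gammaDelta_concat_le {n : ℕ} {α : ℝ} (hα : 0 ≤ α) (w : ℝ → EuclideanSpace ℝ (Fin n))
    {s t u δ : ℝ} :
    gammaDelta α w s u δ ≤ gammaDelta α w s t δ + gammaDelta α w t u δ := by
  by_cases h1 : gammaDelta α w s t δ = ⊤
  · rw [h1]; simp
  by_cases h2 : gammaDelta α w t u δ = ⊤
  · rw [h2]; simp
  apply ENNReal.le_of_forall_pos_le_add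
  intro ε hε _
  have hc : ((ε : ℝ≥0∞) / 2) ≠ 0 := by
    simp [ENNReal.div_eq_zero_iff]
    exact_mod_cast hε.ne'
  have hP' : gammaDelta α w s t δ < gammaDelta α w s t δ + (ε : ℝ≥0∞) / 2 :=
    ENNReal.lt_add_right h1 hc
  have hQ' : gammaDelta α w t u δ < gammaDelta α w t u δ + (ε : ℝ≥0∞) / 2 :=
    ENNReal.lt_add_right h2 hc
  rw [gammaDelta, iInf_lt_iff] at hP'
  obtain ⟨P, hP'⟩ := hP'
  rw [iInf_lt_iff] at hP'
  obtain ⟨hPm, hPv⟩ := hP'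
  rw [gammaDelta, iInf_lt_iff] at hQ'
  obtain ⟨Q, hQ'⟩ := hQ'
  rw [iInf_lt_iff] at hQ'
  obtain ⟨hQm, hQv⟩ := hQ'
  have step1 : gammaDelta α w s u δ ≤ ENNReal.ofReal (sigmaSum α w (concat P Q)) :=
    gammaDelta_le_ofReal w _ (concat_meshLE hPm hQm)
  rw [sigmaSum_concat] at step1
  have step2 : ENNReal.ofReal (sigmaSum α w P + sigmaSum α w Q)
      ≤ ENNReal.ofReal (sigmaSum α w P) + ENNReal.ofReal (sigmaSum α w Q) :=
    ENNReal.ofReal_add_le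
  calc gammaDelta α w s u δ
      ≤ ENNReal.ofReal (sigmaSum α w P) + ENNReal.ofReal (sigmaSum α w Q) := step1.trans step2
    _ ≤ (gammaDelta α w s t δ + (ε : ℝ≥0∞) / 2) + (gammaDelta α w t u δ + (ε : ℝ≥0∞) / 2) :=
        add_le_add hPv.le hQv.le
    _ = gammaDelta α w s t δ + gammaDelta α w t u δ + ((ε : ℝ≥0∞) / 2 + (ε : ℝ≥0∞) / 2) := by
        rw [add_add_add_comm]
    _ = gammaDelta α w s t δ + gammaDelta α w t u δ + ε := by rw [ENNReal.add_halves]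

theorem gammaDelta_insert_le {n : ℕ} {α : ℝ} (hα : 0 ≤ α) (w : ℝ → EuclideanSpace ℝ (Fin n))
    {s t u δ ε : ℝ} (hε : 0 ≤ ε) (ht : t ∈ Icc s u)
    (hosc : ∀ p ∈ Icc s u, ∀ q ∈ Icc s u, |p - q| ≤ δ → ‖w p - w q‖ ≤ ε) :
    gammaDelta α w s t δ + gammaDelta α w t u δ
      ≤ gammaDelta α w s u δ + ENNReal.ofReal (2 * ε ^ α / Real.Gamma (α + 1)) := by
  by_cases hsu : gammaDelta α w s u δ = ⊤
  · rw [hsu]; simp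
  apply ENNReal.le_of_forall_pos_le_add
  intro ε' hε' _
  have hP' : gammaDelta α w s u δ < gammaDelta α w s u δ + (ε' : ℝ≥0∞) :=
    ENNReal.lt_add_right hsu (by exact_mod_cast hε'.ne')
  rw [gammaDelta, iInf_lt_iff] at hP'
  obtain ⟨P, hP'⟩ := hP'
  rw [iInf_lt_iff] at hP'
  obtain ⟨hPm, hPv⟩ := hP'
  obtain ⟨P₁, P₂, hm1, hm2, hsum⟩ := exists_split hα w hε P hPm ht hosc
  have l1 : gammaDelta α w s t δ ≤ ENNReal.ofReal (sigmaSum α w P₁) :=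
    gammaDelta_le_ofReal w _ hm1
  have l2 : gammaDelta α w t u δ ≤ ENNReal.ofReal (sigmaSum α w P₂) :=
    gammaDelta_le_ofReal w _ hm2
  calc gammaDelta α w s t δ + gammaDelta α w t u δ
      ≤ ENNReal.ofReal (sigmaSum α w P₁) + ENNReal.ofReal (sigmaSum α w P₂) := add_le_add l1 l2
    _ = ENNReal.ofReal (sigmaSum α w P₁ + sigmaSum α w P₂) :=
        (ENNReal.ofReal_add (sigmaSum_nonneg hα w P₁) (sigmaSum_nonneg hα w P₂)).symm
    _ ≤ ENNReal.ofReal (sigmaSum α w P + 2 * ε ^ α / Real.Gamma (α + 1)) :=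
        ENNReal.ofReal_le_ofReal hsum
    _ ≤ ENNReal.ofReal (sigmaSum α w P) + ENNReal.ofReal (2 * ε ^ α / Real.Gamma (α + 1)) :=
        ENNReal.ofReal_add_le
    _ ≤ (gammaDelta α w s u δ + (ε' : ℝ≥0∞)) + ENNReal.ofReal (2 * ε ^ α / Real.Gamma (α + 1)) :=
        add_le_add_left hPv.le _
    _ = gammaDelta α w s u δ + ENNReal.ofReal (2 * ε ^ α / Real.Gamma (α + 1)) + (ε' : ℝ≥0∞) := by
        rw [add_right_comm]

theorem gammaDelta_moveR_le {n : ℕ} {α : ℝ} (hα : 1 ≤ α) (w : ℝ → EuclideanSpace ℝ (Fin n))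
    {a x t δ D : ℝ} (hδ : 0 ≤ δ) (hxt : x ≤ t)
    (hD : ∀ p ∈ Icc a t, ∀ q ∈ Icc a t, ‖w p - w q‖ ≤ D) :
    gammaDelta α w a t (δ + (t - x))
      ≤ gammaDelta α w a x δ
        + ENNReal.ofReal (α * D ^ (α - 1) * ‖w t - w x‖ / Real.Gamma (α + 1)) := by
  by_cases hax : gammaDelta α w a x δ = ⊤
  · rw [hax]; simp
  apply ENNReal.le_of_forall_pos_le_add
  intro ε' hε' _
  have hP' : gammaDelta α w a x δ < gammaDelta α w a x δ + (ε' : ℝ≥0∞) :=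
    ENNReal.lt_add_right hax (by exact_mod_cast hε'.ne')
  rw [gammaDelta, iInf_lt_iff] at hP'
  obtain ⟨P, hP'⟩ := hP'
  rw [iInf_lt_iff] at hP'
  obtain ⟨hPm, hPv⟩ := hP'
  obtain ⟨Q, hQm, hQsum⟩ := exists_moveR hα w hδ hxt hD P hPm
  have l1 : gammaDelta α w a t (δ + (t - x)) ≤ ENNReal.ofReal (sigmaSum α w Q) :=
    gammaDelta_le_ofReal w _ hQm
  calc gammaDelta α w a t (δ + (t - x))
      ≤ ENNReal.ofReal (sigmaSum α w Q) := l1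
    _ ≤ ENNReal.ofReal (sigmaSum α w P + α * D ^ (α - 1) * ‖w t - w x‖ / Real.Gamma (α + 1)) :=
        ENNReal.ofReal_le_ofReal hQsum
    _ ≤ ENNReal.ofReal (sigmaSum α w P)
        + ENNReal.ofReal (α * D ^ (α - 1) * ‖w t - w x‖ / Real.Gamma (α + 1)) :=
        ENNReal.ofReal_add_le
    _ ≤ (gammaDelta α w a x δ + (ε' : ℝ≥0∞))
        + ENNReal.ofReal (α * D ^ (α - 1) * ‖w t - w x‖ / Real.Gamma (α + 1)) :=
        add_le_add_left hPv.le _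
    _ = gammaDelta α w a x δ
        + ENNReal.ofReal (α * D ^ (α - 1) * ‖w t - w x‖ / Real.Gamma (α + 1)) + (ε' : ℝ≥0∞) := by
        rw [add_right_comm]

theorem gammaDelta_moveL_le {n : ℕ} {α : ℝ} (hα : 1 ≤ α) (w : ℝ → EuclideanSpace ℝ (Fin n))
    {s x b δ D : ℝ} (hδ : 0 ≤ δ) (hsx : s ≤ x)
    (hD : ∀ p ∈ Icc s b, ∀ q ∈ Icc s b, ‖w p - w q‖ ≤ D) :
    gammaDelta α w s b (δ + (x - s))
      ≤ gammaDelta α w x b δ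
        + ENNReal.ofReal (α * D ^ (α - 1) * ‖w x - w s‖ / Real.Gamma (α + 1)) := by
  by_cases hxb : gammaDelta α w x b δ = ⊤
  · rw [hxb]; simp
  apply ENNReal.le_of_forall_pos_le_add
  intro ε' hε' _
  have hP' : gammaDelta α w x b δ < gammaDelta α w x b δ + (ε' : ℝ≥0∞) :=
    ENNReal.lt_add_right hxb (by exact_mod_cast hε'.ne')
  rw [gammaDelta, iInf_lt_iff] at hP'
  obtain ⟨P, hP'⟩ := hP'
  rw [iInf_lt_iff] at hP'
  obtain ⟨hPm, hPv⟩ := hP'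
  obtain ⟨Q, hQm, hQsum⟩ := exists_moveL hα w hδ hsx hD P hPm
  have l1 : gammaDelta α w s b (δ + (x - s)) ≤ ENNReal.ofReal (sigmaSum α w Q) :=
    gammaDelta_le_ofReal w _ hQm
  calc gammaDelta α w s b (δ + (x - s))
      ≤ ENNReal.ofReal (sigmaSum α w Q) := l1
    _ ≤ ENNReal.ofReal (sigmaSum α w P + α * D ^ (α - 1) * ‖w x - w s‖ / Real.Gamma (α + 1)) :=
        ENNReal.ofReal_le_ofReal hQsum
    _ ≤ ENNReal.ofReal (sigmaSum α w P)
        + ENNReal.ofReal (α * D ^ (α - 1) * ‖w x - w s‖ / Real.Gamma (α + 1)) :=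
        ENNReal.ofReal_add_le
    _ ≤ (gammaDelta α w x b δ + (ε' : ℝ≥0∞))
        + ENNReal.ofReal (α * D ^ (α - 1) * ‖w x - w s‖ / Real.Gamma (α + 1)) :=
        add_le_add_left hPv.le _
    _ = gammaDelta α w x b δ
        + ENNReal.ofReal (α * D ^ (α - 1) * ‖w x - w s‖ / Real.Gamma (α + 1)) + (ε' : ℝ≥0∞) := by
        rw [add_right_comm]
theorem exists_ofReal_le {c : ℝ≥0∞} (hc : 0 < c) : ∃ r : ℝ, 0 < r ∧ ENNReal.ofReal r ≤ c := by
  rcases eq_or_ne c ⊤ with h | h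
  · exact ⟨1, one_pos, h ▸ le_top⟩
  · refine ⟨c.toReal, ENNReal.toReal_pos hc.ne' h, ?_⟩
    rw [ENNReal.ofReal_toReal h]

theorem exists_eps_pow {α Γ : ℝ} (hα : 1 ≤ α) (hΓ : 0 < Γ) {r : ℝ} (hr : 0 < r) :
    ∃ ε : ℝ, 0 < ε ∧ 4 * ε ^ α / Γ ≤ r := by
  refine ⟨min 1 (Γ * r / 4), by positivity, ?_⟩
  set ε := min 1 (Γ * r / 4) with hε
  have hε0 : 0 < ε := by positivity
  have h1 : ε ^ α ≤ ε := by
    have := Real.rpow_le_rpow_of_exponent_ge hε0 (min_le_left _ _) hα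
    rwa [Real.rpow_one] at this
  have h2 : ε ≤ Γ * r / 4 := min_le_right _ _
  rw [div_le_iff₀ hΓ]
  nlinarith
theorem exists_lin {K Γ : ℝ} (hK : 0 ≤ K) (hΓ : 0 < Γ) {c : ℝ≥0∞} (hc : 0 < c) :
    ∃ r : ℝ, 0 < r ∧ ENNReal.ofReal (K * r / Γ) ≤ c := by
  obtain ⟨r0, hr0, hle⟩ := exists_ofReal_le hc
  refine ⟨Γ * r0 / (K + 1), by positivity, ?_⟩
  refine le_trans (ENNReal.ofReal_le_ofReal ?_) hle
  have he : K * (Γ * r0 / (K + 1)) / Γ = K * r0 / (K + 1) := by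
    field_simp
  rw [he, div_le_iff₀ (by linarith : (0:ℝ) < K + 1)]
  nlinarith

theorem exists_modulus {n : ℕ} {a₀ b₀ : ℝ} {w : ℝ → EuclideanSpace ℝ (Fin n)}
    (hw : ContinuousOn w (Icc a₀ b₀)) {ε : ℝ} (hε : 0 < ε) :
    ∃ δ₀ : ℝ, 0 < δ₀ ∧ ∀ p ∈ Icc a₀ b₀, ∀ q ∈ Icc a₀ b₀, |p - q| ≤ δ₀ → ‖w p - w q‖ ≤ ε := by
  have huc : UniformContinuousOn w (Icc a₀ b₀) :=
    isCompact_Icc.uniformContinuousOn_of_continuous hw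
  rw [Metric.uniformContinuousOn_iff] at huc
  obtain ⟨δ₀, hδ₀, h⟩ := huc ε hε
  refine ⟨δ₀ / 2, by linarith, fun p hp q hq hpq => ?_⟩
  have : dist p q < δ₀ := by
    rw [Real.dist_eq]
    linarith
  have := h p hp q hq this
  rw [dist_eq_norm] at this
  exact this.le

theorem exists_bound {n : ℕ} {a₀ b₀ : ℝ} {w : ℝ → EuclideanSpace ℝ (Fin n)}
    (hw : ContinuousOn w (Icc a₀ b₀)) :
    ∃ D : ℝ, 0 ≤ D ∧ ∀ p ∈ Icc a₀ b₀, ∀ q ∈ Icc a₀ b₀, ‖w p - w q‖ ≤ D := by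
  have hcomp : IsCompact (w '' Icc a₀ b₀) := isCompact_Icc.image_of_continuousOn hw
  obtain ⟨C, hC⟩ := Metric.isBounded_iff.mp hcomp.isBounded
  refine ⟨max C 0, le_max_right _ _, fun p hp q hq => ?_⟩
  have := hC (mem_image_of_mem w hp) (mem_image_of_mem w hq)
  rw [dist_eq_norm] at this
  exact this.trans (le_max_left _ _)

section Main

variable {n : ℕ} {α : ℝ} {a₀ b₀ a b : ℝ} {w : ℝ → EuclideanSpace ℝ (Fin n)}

theorem massFn_le_massFn (hw : ContinuousOn w (Icc a₀ b₀)) (hα : 1 ≤ α)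
    (ha : a₀ ≤ a) (hb : b ≤ b₀) {s u : ℝ} (has : a ≤ s) (hsu : s ≤ u) (hub : u ≤ b)
    (hfin : massFn α w a b ≠ ⊤) :
    massFn α w s u ≤ massFn α w a b := by
  have hα0 : (0:ℝ) ≤ α := by linarith
  have hΓ : 0 < Real.Gamma (α + 1) := Real.Gamma_add_one_pos hα0
  have hsubset : Icc a b ⊆ Icc a₀ b₀ := Icc_subset_Icc ha hb
  apply ENNReal.le_of_forall_pos_le_add
  intro ε0 hε0 _
  obtain ⟨r, hr, hrle⟩ := exists_ofReal_le (c := (ε0 : ℝ≥0∞)) (by exact_mod_cast hε0)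
  obtain ⟨ε, hε, hεr⟩ := exists_eps_pow hα hΓ hr
  obtain ⟨δ₀, hδ₀, hosc⟩ := exists_modulus hw hε
  have key : ∀ δ : ℝ, 0 < δ → δ ≤ δ₀ →
      gammaDelta α w s u δ ≤ massFn α w a b + ENNReal.ofReal (4 * ε ^ α / Real.Gamma (α + 1)) := by
    intro δ hδ hδδ₀
    have hosc1 : ∀ p ∈ Icc a u, ∀ q ∈ Icc a u, |p - q| ≤ δ → ‖w p - w q‖ ≤ ε := by
      intro p hp q hq hpq
      exact hosc p (hsubset ⟨hp.1, hp.2.trans hub⟩) q (hsubset ⟨hq.1, hq.2.trans hub⟩)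
        (hpq.trans hδδ₀)
    have hosc2 : ∀ p ∈ Icc a b, ∀ q ∈ Icc a b, |p - q| ≤ δ → ‖w p - w q‖ ≤ ε := by
      intro p hp q hq hpq
      exact hosc p (hsubset hp) q (hsubset hq) (hpq.trans hδδ₀)
    have h1 : gammaDelta α w a s δ + gammaDelta α w s u δ
        ≤ gammaDelta α w a u δ + ENNReal.ofReal (2 * ε ^ α / Real.Gamma (α + 1)) :=
      gammaDelta_insert_le hα0 w hε.le ⟨has, hsu⟩ hosc1
    have h2 : gammaDelta α w a u δ + gammaDelta α w u b δ
        ≤ gammaDelta α w a b δ + ENNReal.ofReal (2 * ε ^ α / Real.Gamma (α + 1)) :=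
      gammaDelta_insert_le hα0 w hε.le ⟨has.trans hsu, hub⟩ hosc2
    have c1 : gammaDelta α w s u δ
        ≤ gammaDelta α w a u δ + ENNReal.ofReal (2 * ε ^ α / Real.Gamma (α + 1)) :=
      le_trans le_add_self h1
    have c2 : gammaDelta α w a u δ
        ≤ gammaDelta α w a b δ + ENNReal.ofReal (2 * ε ^ α / Real.Gamma (α + 1)) :=
      le_trans le_self_add h2
    have c3 : gammaDelta α w a b δ ≤ massFn α w a b := gammaDelta_le_massFn w hδ
    have hofr : ENNReal.ofReal (2 * ε ^ α / Real.Gamma (α + 1))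
        + ENNReal.ofReal (2 * ε ^ α / Real.Gamma (α + 1))
        = ENNReal.ofReal (4 * ε ^ α / Real.Gamma (α + 1)) := by
      rw [← ENNReal.ofReal_add (by positivity) (by positivity)]
      congr 1
      ring
    calc gammaDelta α w s u δ
        ≤ (gammaDelta α w a b δ + ENNReal.ofReal (2 * ε ^ α / Real.Gamma (α + 1)))
          + ENNReal.ofReal (2 * ε ^ α / Real.Gamma (α + 1)) :=
          c1.trans (add_le_add_left c2 _)
      _ = gammaDelta α w a b δ + ENNReal.ofReal (4 * ε ^ α / Real.Gamma (α + 1)) := by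
          rw [add_assoc, hofr]
      _ ≤ massFn α w a b + ENNReal.ofReal (4 * ε ^ α / Real.Gamma (α + 1)) :=
          add_le_add_left c3 _
  have hfinal : massFn α w s u
      ≤ massFn α w a b + ENNReal.ofReal (4 * ε ^ α / Real.Gamma (α + 1)) := by
    refine iSup₂_le fun δ hδ => ?_
    have hmin : gammaDelta α w s u δ ≤ gammaDelta α w s u (min δ δ₀) :=
      gammaDelta_antitone w (min_le_left _ _)
    exact hmin.trans (key _ (lt_min hδ hδ₀) (min_le_right _ _))
  refine hfinal.trans (add_le_add_right ?_ _)
  exact (ENNReal.ofReal_le_ofReal hεr).trans hrle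

theorem massFn_add (hw : ContinuousOn w (Icc a₀ b₀)) (hα : 1 ≤ α)
    (ha : a₀ ≤ a) (hb : b ≤ b₀) {s t u : ℝ} (has : a ≤ s) (hst : s ≤ t) (htu : t ≤ u)
    (hub : u ≤ b) (hfin : massFn α w a b ≠ ⊤) :
    massFn α w s t + massFn α w t u = massFn α w s u := by
  have hα0 : (0:ℝ) ≤ α := by linarith
  have hΓ : 0 < Real.Gamma (α + 1) := Real.Gamma_add_one_pos hα0
  have hsubset : Icc a b ⊆ Icc a₀ b₀ := Icc_subset_Icc ha hb
  refine le_antisymm ?_ ?_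
  · -- superadditive direction, the hard one
    have hsufin : massFn α w s u ≠ ⊤ :=
      (lt_of_le_of_lt (massFn_le_massFn hw hα ha hb has (hst.trans htu) hub hfin)
        (lt_top_iff_ne_top.mpr hfin)).ne
    apply ENNReal.le_of_forall_pos_le_add
    intro ε0 hε0 _
    obtain ⟨r, hr, hrle⟩ := exists_ofReal_le (c := (ε0 : ℝ≥0∞)) (by exact_mod_cast hε0)
    obtain ⟨ε, hε, hεr⟩ := exists_eps_pow hα hΓ hr
    obtain ⟨δ₀, hδ₀, hosc⟩ := exists_modulus hw hε
    have h24 : (2 : ℝ) * ε ^ α / Real.Gamma (α + 1) ≤ 4 * ε ^ α / Real.Gamma (α + 1) := by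
      apply div_le_div_of_nonneg_right ?_ hΓ.le
      have : (0:ℝ) ≤ ε ^ α := Real.rpow_nonneg hε.le α
      linarith
    have claim : ∀ δ₁ : ℝ, 0 < δ₁ → ∀ δ₂ : ℝ, 0 < δ₂ →
        gammaDelta α w s t δ₁ + gammaDelta α w t u δ₂
          ≤ massFn α w s u + ENNReal.ofReal r := by
      intro δ₁ hδ₁ δ₂ hδ₂
      set δ := min δ₁ (min δ₂ δ₀) with hδdef
      have hδ : 0 < δ := lt_min hδ₁ (lt_min hδ₂ hδ₀)
      have hosc1 : ∀ p ∈ Icc s u, ∀ q ∈ Icc s u, |p - q| ≤ δ → ‖w p - w q‖ ≤ ε := by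
        intro p hp q hq hpq
        refine hosc p (hsubset ⟨has.trans hp.1, hp.2.trans hub⟩)
          q (hsubset ⟨has.trans hq.1, hq.2.trans hub⟩) ?_
        calc |p - q| ≤ δ := hpq
          _ ≤ min δ₂ δ₀ := min_le_right _ _
          _ ≤ δ₀ := min_le_right _ _
      have m1 : gammaDelta α w s t δ₁ ≤ gammaDelta α w s t δ :=
        gammaDelta_antitone w (min_le_left _ _)
      have m2 : gammaDelta α w t u δ₂ ≤ gammaDelta α w t u δ :=
        gammaDelta_antitone w ((min_le_right _ _).trans (min_le_left _ _))
      have hins : gammaDelta α w s t δ + gammaDelta α w t u δ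
          ≤ gammaDelta α w s u δ + ENNReal.ofReal (2 * ε ^ α / Real.Gamma (α + 1)) :=
        gammaDelta_insert_le hα0 w hε.le ⟨hst, htu⟩ hosc1
      calc gammaDelta α w s t δ₁ + gammaDelta α w t u δ₂
          ≤ gammaDelta α w s t δ + gammaDelta α w t u δ := add_le_add m1 m2
        _ ≤ gammaDelta α w s u δ + ENNReal.ofReal (2 * ε ^ α / Real.Gamma (α + 1)) := hins
        _ ≤ massFn α w s u + ENNReal.ofReal r := by
            refine add_le_add (gammaDelta_le_massFn w hδ) ?_
            exact ENNReal.ofReal_le_ofReal (h24.trans hεr)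
    haveI : Nonempty {δ : ℝ // 0 < δ} := ⟨⟨1, one_pos⟩⟩
    have hrw : ∀ x y : ℝ, massFn α w x y = ⨆ d : {δ : ℝ // 0 < δ}, gammaDelta α w x y d.1 := by
      intro x y
      rw [massFn, iSup_subtype']
    rw [hrw s t, hrw t u, ENNReal.iSup_add]
    refine iSup_le fun d1 => ?_
    rw [ENNReal.add_iSup]
    refine iSup_le fun d2 => ?_
    exact (claim d1.1 d1.2 d2.1 d2.2).trans (add_le_add_right hrle _)
  · -- subadditive direction
    refine iSup₂_le fun δ hδ => ?_
    exact (gammaDelta_concat_le hα0 w).trans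
      (add_le_add (gammaDelta_le_massFn w hδ) (gammaDelta_le_massFn w hδ))

end Main
section Main2

variable {n : ℕ} {α : ℝ} {a₀ b₀ a b : ℝ} {w : ℝ → EuclideanSpace ℝ (Fin n)}

theorem massFn_left_est (hw : ContinuousOn w (Icc a₀ b₀)) (hα : 1 ≤ α)
    (ha : a₀ ≤ a) (hb : b ≤ b₀) (hfin : massFn α w a b ≠ ⊤)
    {t : ℝ} (ht : t ∈ Icc a b) {ε0 : ℝ≥0∞} (hε0 : 0 < ε0) :
    ∃ η : ℝ, 0 < η ∧ ∀ x : ℝ, a ≤ x → x ≤ t → t - x ≤ η →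
      massFn α w a t ≤ massFn α w a x + ε0 := by
  have hα0 : (0:ℝ) ≤ α := by linarith
  have hΓ : 0 < Real.Gamma (α + 1) := Real.Gamma_add_one_pos hα0
  by_cases hc : massFn α w a t ≤ ε0
  · exact ⟨1, one_pos, fun x _ _ _ => hc.trans le_add_self⟩
  push_neg at hc
  have hfin_t : massFn α w a t ≠ ⊤ :=
    (lt_of_le_of_lt (massFn_le_massFn hw hα ha hb le_rfl ht.1 ht.2 hfin)
      (lt_top_iff_ne_top.mpr hfin)).ne
  have hhalf_ne : (ε0 / 2 : ℝ≥0∞) ≠ 0 := by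
    simp [ENNReal.div_eq_zero_iff]
    exact hε0.ne'
  have hhalf_pos : (0:ℝ≥0∞) < ε0 / 2 := pos_iff_ne_zero.mpr hhalf_ne
  have hle : ε0 / 2 ≤ massFn α w a t := (ENNReal.half_le_self).trans hc.le
  have hmne : massFn α w a t ≠ 0 := by
    intro h
    rw [h] at hc
    exact absurd hc (by simp)
  have hsub : massFn α w a t - ε0 / 2 < massFn α w a t :=
    ENNReal.sub_lt_self hfin_t hmne hhalf_ne
  have hsub' : massFn α w a t - ε0 / 2 < ⨆ (δ : ℝ) (_ : 0 < δ), gammaDelta α w a t δ := hsub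
  rw [lt_iSup_iff] at hsub'
  obtain ⟨δ₁, hsub'⟩ := hsub'
  rw [lt_iSup_iff] at hsub'
  obtain ⟨hδ₁, hval⟩ := hsub'
  have hmt : massFn α w a t ≤ gammaDelta α w a t δ₁ + ε0 / 2 := by
    calc massFn α w a t = massFn α w a t - ε0 / 2 + ε0 / 2 := (tsub_add_cancel_of_le hle).symm
      _ ≤ gammaDelta α w a t δ₁ + ε0 / 2 := add_le_add_left hval.le _
  obtain ⟨D, hD0, hD⟩ := exists_bound hw
  have hK : 0 ≤ α * D ^ (α - 1) := by positivity
  obtain ⟨r, hr, hrle⟩ := exists_lin hK hΓ hhalf_pos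
  have htmem : t ∈ Icc a₀ b₀ := ⟨ha.trans ht.1, ht.2.trans hb⟩
  have hwt : ContinuousWithinAt w (Icc a₀ b₀) t := hw t htmem
  rw [Metric.continuousWithinAt_iff] at hwt
  obtain ⟨η₁, hη₁, hcont⟩ := hwt r hr
  refine ⟨min (η₁ / 2) (δ₁ / 2), by positivity, fun x hax hxt hdist => ?_⟩
  have hmin1 : t - x ≤ η₁ / 2 := hdist.trans (min_le_left _ _)
  have hmin2 : t - x ≤ δ₁ / 2 := hdist.trans (min_le_right _ _)
  have hx0 : x ∈ Icc a₀ b₀ := ⟨ha.trans hax, (hxt.trans ht.2).trans hb⟩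
  have hnorm : ‖w t - w x‖ ≤ r := by
    have hd : dist x t < η₁ := by
      rw [Real.dist_eq, abs_sub_comm, abs_of_nonneg (by linarith)]
      linarith
    have hlt := hcont hx0 hd
    rw [dist_eq_norm, norm_sub_rev] at hlt
    exact hlt.le
  have hDat : ∀ p ∈ Icc a t, ∀ q ∈ Icc a t, ‖w p - w q‖ ≤ D := fun p hp q hq =>
    hD p ⟨ha.trans hp.1, (hp.2.trans ht.2).trans hb⟩ q ⟨ha.trans hq.1, (hq.2.trans ht.2).trans hb⟩
  have hmove := gammaDelta_moveR_le hα w (δ := δ₁ / 2) (by positivity) hxt hDat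
  have hanti : gammaDelta α w a t δ₁ ≤ gammaDelta α w a t (δ₁ / 2 + (t - x)) :=
    gammaDelta_antitone w (by linarith)
  calc massFn α w a t ≤ gammaDelta α w a t δ₁ + ε0 / 2 := hmt
    _ ≤ gammaDelta α w a t (δ₁ / 2 + (t - x)) + ε0 / 2 := add_le_add_left hanti _
    _ ≤ (gammaDelta α w a x (δ₁ / 2)
        + ENNReal.ofReal (α * D ^ (α - 1) * ‖w t - w x‖ / Real.Gamma (α + 1))) + ε0 / 2 :=
        add_le_add_left hmove _
    _ ≤ (massFn α w a x + ε0 / 2) + ε0 / 2 := by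
        refine add_le_add_left (add_le_add (gammaDelta_le_massFn w (by positivity)) ?_) _
        refine le_trans (ENNReal.ofReal_le_ofReal ?_) hrle
        apply div_le_div_of_nonneg_right ?_ hΓ.le
        exact mul_le_mul_of_nonneg_left hnorm hK
    _ = massFn α w a x + ε0 := by rw [add_assoc, ENNReal.add_halves]

theorem massFn_right_est (hw : ContinuousOn w (Icc a₀ b₀)) (hα : 1 ≤ α)
    (ha : a₀ ≤ a) (hb : b ≤ b₀) (hfin : massFn α w a b ≠ ⊤)
    {t : ℝ} (ht : t ∈ Icc a b) {ε0 : ℝ≥0∞} (hε0 : 0 < ε0) :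
    ∃ η : ℝ, 0 < η ∧ ∀ x : ℝ, t ≤ x → x ≤ b → x - t ≤ η →
      massFn α w t b ≤ massFn α w x b + ε0 := by
  have hα0 : (0:ℝ) ≤ α := by linarith
  have hΓ : 0 < Real.Gamma (α + 1) := Real.Gamma_add_one_pos hα0
  by_cases hc : massFn α w t b ≤ ε0
  · exact ⟨1, one_pos, fun x _ _ _ => hc.trans le_add_self⟩
  push_neg at hc
  have hfin_t : massFn α w t b ≠ ⊤ :=
    (lt_of_le_of_lt (massFn_le_massFn hw hα ha hb ht.1 ht.2 le_rfl hfin)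
      (lt_top_iff_ne_top.mpr hfin)).ne
  have hhalf_ne : (ε0 / 2 : ℝ≥0∞) ≠ 0 := by
    simp [ENNReal.div_eq_zero_iff]
    exact hε0.ne'
  have hhalf_pos : (0:ℝ≥0∞) < ε0 / 2 := pos_iff_ne_zero.mpr hhalf_ne
  have hle : ε0 / 2 ≤ massFn α w t b := (ENNReal.half_le_self).trans hc.le
  have hmne : massFn α w t b ≠ 0 := by
    intro h
    rw [h] at hc
    exact absurd hc (by simp)
  have hsub : massFn α w t b - ε0 / 2 < massFn α w t b :=
    ENNReal.sub_lt_self hfin_t hmne hhalf_ne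
  have hsub' : massFn α w t b - ε0 / 2 < ⨆ (δ : ℝ) (_ : 0 < δ), gammaDelta α w t b δ := hsub
  rw [lt_iSup_iff] at hsub'
  obtain ⟨δ₁, hsub'⟩ := hsub'
  rw [lt_iSup_iff] at hsub'
  obtain ⟨hδ₁, hval⟩ := hsub'
  have hmt : massFn α w t b ≤ gammaDelta α w t b δ₁ + ε0 / 2 := by
    calc massFn α w t b = massFn α w t b - ε0 / 2 + ε0 / 2 := (tsub_add_cancel_of_le hle).symm
      _ ≤ gammaDelta α w t b δ₁ + ε0 / 2 := add_le_add_left hval.le _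
  obtain ⟨D, hD0, hD⟩ := exists_bound hw
  have hK : 0 ≤ α * D ^ (α - 1) := by positivity
  obtain ⟨r, hr, hrle⟩ := exists_lin hK hΓ hhalf_pos
  have htmem : t ∈ Icc a₀ b₀ := ⟨ha.trans ht.1, ht.2.trans hb⟩
  have hwt : ContinuousWithinAt w (Icc a₀ b₀) t := hw t htmem
  rw [Metric.continuousWithinAt_iff] at hwt
  obtain ⟨η₁, hη₁, hcont⟩ := hwt r hr
  refine ⟨min (η₁ / 2) (δ₁ / 2), by positivity, fun x hxt hxb hdist => ?_⟩
  have hmin1 : x - t ≤ η₁ / 2 := hdist.trans (min_le_left _ _)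
  have hmin2 : x - t ≤ δ₁ / 2 := hdist.trans (min_le_right _ _)
  have hx0 : x ∈ Icc a₀ b₀ := ⟨ha.trans (ht.1.trans hxt), hxb.trans hb⟩
  have hnorm : ‖w x - w t‖ ≤ r := by
    have hd : dist x t < η₁ := by
      rw [Real.dist_eq, abs_of_nonneg (by linarith)]
      linarith
    have hlt := hcont hx0 hd
    rw [dist_eq_norm] at hlt
    exact hlt.le
  have hDat : ∀ p ∈ Icc t b, ∀ q ∈ Icc t b, ‖w p - w q‖ ≤ D := fun p hp q hq =>
    hD p ⟨ha.trans (ht.1.trans hp.1), hp.2.trans hb⟩ q ⟨ha.trans (ht.1.trans hq.1), hq.2.trans hb⟩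
  have hmove := gammaDelta_moveL_le hα w (δ := δ₁ / 2) (by positivity) hxt hDat
  have hanti : gammaDelta α w t b δ₁ ≤ gammaDelta α w t b (δ₁ / 2 + (x - t)) :=
    gammaDelta_antitone w (by linarith)
  calc massFn α w t b ≤ gammaDelta α w t b δ₁ + ε0 / 2 := hmt
    _ ≤ gammaDelta α w t b (δ₁ / 2 + (x - t)) + ε0 / 2 := add_le_add_left hanti _
    _ ≤ (gammaDelta α w x b (δ₁ / 2)
        + ENNReal.ofReal (α * D ^ (α - 1) * ‖w x - w t‖ / Real.Gamma (α + 1))) + ε0 / 2 :=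
        add_le_add_left hmove _
    _ ≤ (massFn α w x b + ε0 / 2) + ε0 / 2 := by
        refine add_le_add_left (add_le_add (gammaDelta_le_massFn w (by positivity)) ?_) _
        refine le_trans (ENNReal.ofReal_le_ofReal ?_) hrle
        apply div_le_div_of_nonneg_right ?_ hΓ.le
        exact mul_le_mul_of_nonneg_left hnorm hK
    _ = massFn α w x b + ε0 := by rw [add_assoc, ENNReal.add_halves]

end Main2

/-- If γ^α(F,a,b) < ∞ then t ↦ γ^α(F,a,t) is continuous on [a,b];
in particular the mass function is atomless (single points carry zero mass). -/
theorem massFn_continuous {n : ℕ} (hn : 1 ≤ n) {a₀ b₀ : ℝ}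
    (w : ℝ → EuclideanSpace ℝ (Fin n))
    (hw : ContinuousOn w (Icc a₀ b₀)) (hinj : InjOn w (Icc a₀ b₀))
    {α : ℝ} (hα : α ∈ Icc (1 : ℝ) (n : ℝ))
    {a b : ℝ} (ha : a₀ ≤ a) (hab : a ≤ b) (hb : b ≤ b₀)
    (hfin : massFn α w a b ≠ ⊤) :
    ContinuousOn (fun t => massFn α w a t) (Icc a b) ∧
    ∀ t ∈ Icc a b, massFn α w t t = 0 := by
  have hα1 : 1 ≤ α := hα.1
  constructor
  · intro t ht
    have hmtfin : massFn α w a t ≠ ⊤ :=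
      (lt_of_le_of_lt (massFn_le_massFn hw hα1 ha hb le_rfl ht.1 ht.2 hfin)
        (lt_top_iff_ne_top.mpr hfin)).ne
    have hmono : ∀ x y : ℝ, a ≤ x → x ≤ y → y ≤ b → massFn α w a x ≤ massFn α w a y := by
      intro x y hax hxy hyb
      have := massFn_add hw hα1 ha hb le_rfl hax hxy hyb hfin
      exact le_of_le_of_eq le_self_add this
    refine (ENNReal.tendsto_nhds hmtfin).mpr fun ε hε => ?_
    obtain ⟨η₁, hη₁, hleft⟩ := massFn_left_est hw hα1 ha hb hfin ht hε
    obtain ⟨η₂, hη₂, hright⟩ := massFn_right_est hw hα1 ha hb hfin ht hε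
    have hev1 : ∀ᶠ x in nhdsWithin t (Icc a b), |x - t| < min η₁ η₂ :=
      (eventually_abs_sub_lt t (lt_min hη₁ hη₂)).filter_mono nhdsWithin_le_nhds
    have hev2 : ∀ᶠ x in nhdsWithin t (Icc a b), x ∈ Icc a b := eventually_mem_nhdsWithin
    filter_upwards [hev1, hev2] with x hx hxs
    rcases le_total x t with hxt | htx
    · have h1 : massFn α w a x ≤ massFn α w a t := hmono x t hxs.1 hxt ht.2
      have h2 : massFn α w a t ≤ massFn α w a x + ε := by
        apply hleft x hxs.1 hxt
        have : t - x ≤ |x - t| := by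
          rw [abs_sub_comm]
          exact le_abs_self _
        have := this.trans hx.le
        exact this.trans (min_le_left _ _)
      exact ⟨tsub_le_iff_right.mpr h2, h1.trans le_self_add⟩
    · have h1 : massFn α w a t ≤ massFn α w a x := hmono t x ht.1 htx hxs.2
      have h2 : massFn α w t b ≤ massFn α w x b + ε := by
        apply hright x htx hxs.2
        have : x - t ≤ |x - t| := le_abs_self _
        have := this.trans hx.le
        exact this.trans (min_le_right _ _)
      have hadd1 : massFn α w a t + massFn α w t b = massFn α w a b :=
        massFn_add hw hα1 ha hb le_rfl ht.1 ht.2 le_rfl hfin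
      have hadd2 : massFn α w a x + massFn α w x b = massFn α w a b :=
        massFn_add hw hα1 ha hb le_rfl hxs.1 hxs.2 le_rfl hfin
      have hxbfin : massFn α w x b ≠ ⊤ :=
        (lt_of_le_of_lt (massFn_le_massFn hw hα1 ha hb hxs.1 hxs.2 le_rfl hfin)
          (lt_top_iff_ne_top.mpr hfin)).ne
      have hup : massFn α w a x ≤ massFn α w a t + ε := by
        have step : massFn α w a x + massFn α w x b ≤ (massFn α w a t + ε) + massFn α w x b := by
          calc massFn α w a x + massFn α w x b = massFn α w a t + massFn α w t b := by
                rw [hadd1, hadd2]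
            _ ≤ massFn α w a t + (massFn α w x b + ε) := add_le_add_right h2 _
            _ = (massFn α w a t + ε) + massFn α w x b := by
                rw [add_comm (massFn α w x b) ε, ← add_assoc]
        exact (ENNReal.add_le_add_iff_right hxbfin).mp step
      exact ⟨le_trans tsub_le_self h1, hup⟩
  · intro t _
    exact massFn_self α w t
end

section
/- Let w₁ : [a₁,b₁] → ℝⁿ and w₂ : [a₂,b₂] → ℝⁿ be two continuous injective parametrizations of the same curve F (i.e., w₁([a₁,b₁]) = w₂([a₂,b₂])) with the same orientation: w₁(a₁) = w₂(a₂) and w₁(b₁) = w₂(b₂). Then the mass function is independent of the parametrization: γ^α(F, a₁, b₁; w₁) = γ^α(F, a₂, b₂; w₂). -/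
open Set
open scoped ENNReal

theorem Subdivision.t_le {a b : ℝ} (P : Subdivision a b) :
    ∀ {i j : ℕ}, i ≤ j → j ≤ P.k → P.t i ≤ P.t j := by
  intro i j hij hjk
  induction j with
  | zero => simp_all
  | succ m ih =>
    rcases Nat.eq_or_lt_of_le hij with rfl | h
    · exact le_refl _
    · exact (ih (Nat.lt_succ_iff.mp h) (le_trans (Nat.le_succ m) hjk)).trans
        (P.mono m (Nat.lt_of_succ_le hjk)).le

theorem Subdivision.t_mem_s7 {a b : ℝ} (P : Subdivision a b) {i : ℕ} (hi : i ≤ P.k) :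
    P.t i ∈ Icc a b :=
  ⟨(le_of_eq P.first.symm).trans (P.t_le (Nat.zero_le i) hi),
   (P.t_le hi le_rfl).trans (le_of_eq P.last)⟩

theorem massFn_le_reparam {n : ℕ} (α : ℝ) {a₁ b₁ a₂ b₂ : ℝ}
    (w₁ w₂ : ℝ → EuclideanSpace ℝ (Fin n)) (φ : ℝ → ℝ)
    (hmono : StrictMonoOn φ (Icc a₁ b₁)) (hcont : ContinuousOn φ (Icc a₁ b₁))
    (hφa : φ a₁ = a₂) (hφb : φ b₁ = b₂)
    (hcomp : ∀ t ∈ Icc a₁ b₁, w₂ (φ t) = w₁ t) :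
    massFn α w₂ a₂ b₂ ≤ massFn α w₁ a₁ b₁ := by
  simp only [massFn]
  refine iSup₂_le fun ε hε => ?_
  have huc : UniformContinuousOn φ (Icc a₁ b₁) :=
    isCompact_Icc.uniformContinuousOn_of_continuous hcont
  obtain ⟨δ, hδ, hδ'⟩ := Metric.uniformContinuousOn_iff.mp huc ε hε
  refine le_trans ?_ (le_iSup₂ (δ / 2) (by positivity))
  simp only [gammaDelta]
  refine le_iInf₂ fun P hP => ?_
  have htmem : ∀ {i : ℕ}, i ≤ P.k → P.t i ∈ Icc a₁ b₁ := fun h => P.t_mem_s7 h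
  set Q : Subdivision a₂ b₂ :=
    { k := P.k
      t := fun i => φ (P.t (min i P.k))
      first := by
        simp only [Nat.zero_min, P.first, hφa]
      last := by simp only [min_self, P.last, hφb]
      mono := fun i hi => by
        simp only [min_eq_left hi.le, min_eq_left (Nat.succ_le_of_lt hi)]
        exact hmono (htmem hi.le) (htmem hi) (P.mono i hi) } with hQdef
  have hQ : Q.MeshLE ε := by
    intro i hi
    have hi' : i < P.k := hi
    show φ (P.t (min (i + 1) P.k)) - φ (P.t (min i P.k)) ≤ ε
    rw [min_eq_left (Nat.succ_le_of_lt hi'), min_eq_left hi'.le]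
    have hd : dist (P.t (i + 1)) (P.t i) < δ := by
      rw [Real.dist_eq, abs_of_nonneg (sub_nonneg.mpr (P.mono i hi').le)]
      have := hP i hi'
      linarith
    have h2 := hδ' _ (htmem (Nat.succ_le_of_lt hi')) _ (htmem hi'.le) hd
    calc φ (P.t (i + 1)) - φ (P.t i) ≤ |φ (P.t (i + 1)) - φ (P.t i)| := le_abs_self _
      _ = dist (φ (P.t (i + 1))) (φ (P.t i)) := (Real.dist_eq _ _).symm
      _ ≤ ε := h2.le
  refine le_trans (iInf₂_le Q hQ) (le_of_eq ?_)
  congr 1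
  simp only [sigmaSum]
  congr 1
  refine Finset.sum_congr rfl fun i hi => ?_
  rw [Finset.mem_range] at hi
  show ‖w₂ (φ (P.t (min (i + 1) P.k))) - w₂ (φ (P.t (min i P.k)))‖ ^ α = _
  rw [min_eq_left (Nat.succ_le_of_lt hi), min_eq_left hi.le,
    hcomp _ (htmem (Nat.succ_le_of_lt hi)), hcomp _ (htmem hi.le)]

theorem continuousOn_invFunOn_of_isCompact {E : Type*} [TopologicalSpace E] [T2Space E]
    {f : ℝ → E} {K : Set ℝ} (hK : IsCompact K) (hf : ContinuousOn f K)
    (hinj : InjOn f K) : ContinuousOn (Function.invFunOn f K) (f '' K) := by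
  haveI : CompactSpace K := isCompact_iff_compactSpace.mp hK
  set e : K ≃ f '' K := Equiv.Set.imageOfInjOn f K hinj with he
  have hc : Continuous (e : K → f '' K) := Continuous.subtype_mk hf.restrict _
  set h : K ≃ₜ (f '' K) := Continuous.homeoOfEquivCompactToT2 hc with hh
  rw [continuousOn_iff_continuous_restrict]
  have : (f '' K).domRestrict (Function.invFunOn f K) = Subtype.val ∘ h.symm := by
    funext y
    have h1 : f ((h.symm y : K) : ℝ) = (y : E) := by
      have := h.apply_symm_apply y
      exact congrArg Subtype.val this
    have h2 : ∃ a ∈ K, f a = (y : E) := by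
      obtain ⟨x, hx, hxy⟩ := y.2; exact ⟨x, hx, hxy⟩
    exact hinj (Function.invFunOn_mem h2) (h.symm y).2
      ((Function.invFunOn_eq h2).trans h1.symm)
  rw [this]
  exact continuous_subtype_val.comp h.symm.continuous

/-- One direction of reparametrization invariance. -/
theorem massFn_le_main {n : ℕ} (α : ℝ) {a₁ b₁ a₂ b₂ : ℝ}
    (hab₁ : a₁ ≤ b₁) (hab₂ : a₂ ≤ b₂)
    (w₁ w₂ : ℝ → EuclideanSpace ℝ (Fin n))
    (hw₁ : ContinuousOn w₁ (Icc a₁ b₁)) (hinj₁ : InjOn w₁ (Icc a₁ b₁))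
    (hw₂ : ContinuousOn w₂ (Icc a₂ b₂)) (hinj₂ : InjOn w₂ (Icc a₂ b₂))
    (himage : w₁ '' Icc a₁ b₁ = w₂ '' Icc a₂ b₂)
    (hstart : w₁ a₁ = w₂ a₂) (hend : w₁ b₁ = w₂ b₂) :
    massFn α w₁ a₁ b₁ ≤ massFn α w₂ a₂ b₂ := by
  set φ : ℝ → ℝ := fun t => Function.invFunOn w₁ (Icc a₁ b₁) (w₂ t) with hφdef
  have hex : ∀ t ∈ Icc a₂ b₂, ∃ s ∈ Icc a₁ b₁, w₁ s = w₂ t := by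
    intro t ht
    have : w₂ t ∈ w₁ '' Icc a₁ b₁ := by
      rw [himage]; exact mem_image_of_mem w₂ ht
    obtain ⟨s, hs, hst⟩ := this
    exact ⟨s, hs, hst⟩
  have hmem : ∀ t ∈ Icc a₂ b₂, φ t ∈ Icc a₁ b₁ :=
    fun t ht => Function.invFunOn_mem (hex t ht)
  have hcomp : ∀ t ∈ Icc a₂ b₂, w₁ (φ t) = w₂ t :=
    fun t ht => Function.invFunOn_eq (hex t ht)
  have ha₂ : a₂ ∈ Icc a₂ b₂ := left_mem_Icc.mpr hab₂
  have hb₂ : b₂ ∈ Icc a₂ b₂ := right_mem_Icc.mpr hab₂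
  have hφa : φ a₂ = a₁ := by
    refine hinj₁ (hmem a₂ ha₂) (left_mem_Icc.mpr hab₁) ?_
    rw [hcomp a₂ ha₂, ← hstart]
  have hφb : φ b₂ = b₁ := by
    refine hinj₁ (hmem b₂ hb₂) (right_mem_Icc.mpr hab₁) ?_
    rw [hcomp b₂ hb₂, ← hend]
  have hcont : ContinuousOn φ (Icc a₂ b₂) := by
    refine (continuousOn_invFunOn_of_isCompact isCompact_Icc hw₁ hinj₁).comp hw₂ ?_
    intro t ht
    rw [himage]
    exact mem_image_of_mem w₂ ht
  have hinjφ : InjOn φ (Icc a₂ b₂) := by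
    intro s hs t ht hst
    have : w₂ s = w₂ t := by rw [← hcomp s hs, ← hcomp t ht, hst]
    exact hinj₂ hs ht this
  have hmonoφ : StrictMonoOn φ (Icc a₂ b₂) := by
    refine ContinuousOn.strictMonoOn_of_injOn_Icc hab₂ ?_ hcont hinjφ
    rw [hφa, hφb]; exact hab₁
  exact massFn_le_reparam α w₂ w₁ φ hmonoφ hcont hφa hφb hcomp

/-- the mass function is independent of the (same-oriented,
continuous, injective) parametrization:
γ^α(F,a₁,b₁;w₁) = γ^α(F,a₂,b₂;w₂). -/
theorem massFn_reparam {n : ℕ} (hn : 1 ≤ n) {a₁ b₁ a₂ b₂ : ℝ}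
    (hab₁ : a₁ ≤ b₁) (hab₂ : a₂ ≤ b₂)
    (w₁ w₂ : ℝ → EuclideanSpace ℝ (Fin n))
    (hw₁ : ContinuousOn w₁ (Icc a₁ b₁)) (hinj₁ : InjOn w₁ (Icc a₁ b₁))
    (hw₂ : ContinuousOn w₂ (Icc a₂ b₂)) (hinj₂ : InjOn w₂ (Icc a₂ b₂))
    (himage : w₁ '' Icc a₁ b₁ = w₂ '' Icc a₂ b₂)
    (hstart : w₁ a₁ = w₂ a₂) (hend : w₁ b₁ = w₂ b₂)
    {α : ℝ} (hα : α ∈ Icc (1 : ℝ) (n : ℝ)) :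
    massFn α w₁ a₁ b₁ = massFn α w₂ a₂ b₂ := by
  exact le_antisymm
    (massFn_le_main α hab₁ hab₂ w₁ w₂ hw₁ hinj₁ hw₂ hinj₂ himage hstart hend)
    (massFn_le_main α hab₂ hab₁ w₂ w₁ hw₂ hinj₂ hw₁ hinj₁ himage.symm hstart.symm hend.symm)
end

section
/- Second fundamental theorem of F^α-calculus: let f : F → ℝ be such that (D_F^α f)(θ) exists for all θ ∈ C(a,b) = w([a,b]) and let h : F → ℝ be F-continuous with h(θ) = (D_F^α f)(θ) on C(a,b). Then ∫_{C(a,b)} h(θ) d_F^α θ = f(w(b)) − f(w(a)). -/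
open Set
open scoped ENNReal

/-- The staircase (rise) function S_F^α(t) = γ^α(F,a₀,t). -/
noncomputable def SF {n : ℕ} (α : ℝ) (w : ℝ → EuclideanSpace ℝ (Fin n))
    (a₀ : ℝ) (t : ℝ) : ℝ :=
  (massFn α w a₀ t).toReal

/-- `l` is the F-limit of `f` as θ' → θ through points of `F`. -/
def IsFLimit {n : ℕ} (F : Set (EuclideanSpace ℝ (Fin n)))
    (f : EuclideanSpace ℝ (Fin n) → ℝ) (θ : EuclideanSpace ℝ (Fin n)) (l : ℝ) : Prop :=
  ∀ ε > (0 : ℝ), ∃ δ > (0 : ℝ), ∀ θ' ∈ F, θ' ≠ θ → ‖θ' - θ‖ < δ → |f θ' - l| < ε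

/-- `f` is F-continuous at θ. -/
def FContinuousAt {n : ℕ} (F : Set (EuclideanSpace ℝ (Fin n)))
    (f : EuclideanSpace ℝ (Fin n) → ℝ) (θ : EuclideanSpace ℝ (Fin n)) : Prop :=
  IsFLimit F f θ (f θ)

/-- The F^α-derivative of `f` at θ is `l`:
l = F-lim_{θ'→θ} (f(θ') − f(θ))/(J(θ') − J(θ)). -/
def HasFAlphaDerivAt {n : ℕ} (F : Set (EuclideanSpace ℝ (Fin n)))
    (J : EuclideanSpace ℝ (Fin n) → ℝ) (f : EuclideanSpace ℝ (Fin n) → ℝ)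
    (θ : EuclideanSpace ℝ (Fin n)) (l : ℝ) : Prop :=
  IsFLimit F (fun θ' => (f θ' - f θ) / (J θ' - J θ)) θ l

/-- Upper F^α-sum U^α[f,F,P] of `f` over the subdivision `P`. -/
noncomputable def upperFSum {n : ℕ} (α : ℝ) (w : ℝ → EuclideanSpace ℝ (Fin n))
    (a₀ : ℝ) (f : EuclideanSpace ℝ (Fin n) → ℝ) {a b : ℝ} (P : Subdivision a b) : ℝ :=
  ∑ i ∈ Finset.range P.k,
    sSup (f '' (w '' Icc (P.t i) (P.t (i + 1)))) *
      (SF α w a₀ (P.t (i + 1)) - SF α w a₀ (P.t i))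

/-- Lower F^α-sum L^α[f,F,P] of `f` over the subdivision `P`. -/
noncomputable def lowerFSum {n : ℕ} (α : ℝ) (w : ℝ → EuclideanSpace ℝ (Fin n))
    (a₀ : ℝ) (f : EuclideanSpace ℝ (Fin n) → ℝ) {a b : ℝ} (P : Subdivision a b) : ℝ :=
  ∑ i ∈ Finset.range P.k,
    sInf (f '' (w '' Icc (P.t i) (P.t (i + 1)))) *
      (SF α w a₀ (P.t (i + 1)) - SF α w a₀ (P.t i))

/-- `f` is F^α-integrable on C(a,b) with integral `v`:
inf of upper sums = sup of lower sums = v. -/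
def HasFIntegral {n : ℕ} (α : ℝ) (w : ℝ → EuclideanSpace ℝ (Fin n)) (a₀ : ℝ)
    (f : EuclideanSpace ℝ (Fin n) → ℝ) (a b : ℝ) (v : ℝ) : Prop :=
  sInf (Set.range fun P : Subdivision a b => upperFSum α w a₀ f P) = v ∧
  sSup (Set.range fun P : Subdivision a b => lowerFSum α w a₀ f P) = v


lemma subdivision_t_le {a b : ℝ} (P : Subdivision a b) {i j : ℕ} (hij : i ≤ j) (hj : j ≤ P.k) :
    P.t i ≤ P.t j := by
  induction j with
  | zero =>
    obtain rfl : i = 0 := Nat.le_zero.mp hij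
    exact le_refl _
  | succ m ih =>
    have hm : m < P.k := Nat.lt_of_lt_of_le (Nat.lt_succ_self m) hj
    rcases Nat.eq_or_lt_of_le hij with rfl | hlt
    · exact le_refl _
    · exact le_trans (ih (Nat.lt_succ_iff.mp hlt) (le_of_lt hm)) (le_of_lt (P.mono m hm))


lemma fal_upper {n : ℕ} {a₀ b₀ : ℝ} {w : ℝ → EuclideanSpace ℝ (Fin n)}
    (hw : ContinuousOn w (Icc a₀ b₀)) (hinj : InjOn w (Icc a₀ b₀))
    {S : ℝ → ℝ} (hS : StrictMonoOn S (Icc a₀ b₀))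
    {J f h : EuclideanSpace ℝ (Fin n) → ℝ}
    (hJ : ∀ t ∈ Icc a₀ b₀, J (w t) = S t)
    {u v : ℝ} (hu : a₀ ≤ u) (huv : u ≤ v) (hv : v ≤ b₀)
    (hdiff : ∀ θ ∈ w '' Icc u v, HasFAlphaDerivAt (w '' Icc a₀ b₀) J f θ (h θ))
    (hbdd : BddAbove (h '' (w '' Icc u v))) :
    f (w v) - f (w u) ≤ sSup (h '' (w '' Icc u v)) * (S v - S u) := by
  rcases eq_or_lt_of_le huv with rfl | hlt
  · simp
  set M := sSup (h '' (w '' Icc u v)) with hM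
  have hsub : Icc u v ⊆ Icc a₀ b₀ := Icc_subset_Icc hu hv
  have hMb : ∀ t ∈ Icc u v, h (w t) ≤ M := fun t ht =>
    le_csSup hbdd ⟨w t, ⟨t, ht, rfl⟩, rfl⟩
  have hΔ : 0 ≤ S v - S u := by
    have := hS.monotoneOn (hsub (left_mem_Icc.2 huv)) (hsub (right_mem_Icc.2 huv)) huv
    linarith
  have key : ∀ ε > (0:ℝ), f (w v) - f (w u) ≤ (M + ε) * (S v - S u) := by
    intro ε hε
    set A := {t | t ∈ Icc u v ∧ f (w t) - f (w u) ≤ (M + ε) * (S t - S u)} with hA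
    have huA : u ∈ A := ⟨left_mem_Icc.2 huv, by simp⟩
    have hAne : A.Nonempty := ⟨u, huA⟩
    have hAbdd : BddAbove A := ⟨v, fun t ht => ht.1.2⟩
    set c := sSup A with hc
    have hcIcc : c ∈ Icc u v := ⟨le_csSup hAbdd huA, csSup_le hAne fun t ht => ht.1.2⟩
    have hc₀ : c ∈ Icc a₀ b₀ := hsub hcIcc
    -- derivative at c
    obtain ⟨δ, hδ, hder⟩ := hdiff (w c) ⟨c, hcIcc, rfl⟩ ε hε
    -- continuity of w at c
    obtain ⟨η, hη, hwc⟩ := Metric.continuousWithinAt_iff.mp (hw c hc₀) δ hδ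
    -- the quotient estimate
    have hq : ∀ t' ∈ Icc a₀ b₀, t' ≠ c → |t' - c| < η →
        (f (w t') - f (w c)) / (S t' - S c) < h (w c) + ε := by
      intro t' ht' hne hlt'
      have hwne : w t' ≠ w c := fun he => hne (hinj ht' hc₀ he)
      have hdist : ‖w t' - w c‖ < δ := by
        rw [← dist_eq_norm]
        exact hwc ht' (by rwa [Real.dist_eq])
      have h1 : |(f (w t') - f (w c)) / (J (w t') - J (w c)) - h (w c)| < ε :=
        hder (w t') ⟨t', ht', rfl⟩ hwne hdist
      rw [hJ t' ht', hJ c hc₀] at h1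
      have := (abs_lt.mp h1).2
      linarith
    -- step for points to the right of c
    have hup : ∀ t' ∈ Icc a₀ b₀, c < t' → |t' - c| < η →
        f (w t') - f (w c) ≤ (M + ε) * (S t' - S c) := by
      intro t' ht' hct hlt'
      have hSd : 0 < S t' - S c := by
        have := hS hc₀ ht' hct; linarith
      have h2 := hq t' ht' (ne_of_gt hct) hlt'
      rw [div_lt_iff₀ hSd] at h2
      have h3 : h (w c) ≤ M := hMb c hcIcc
      nlinarith
    -- step for points to the left of c
    have hdown : ∀ t' ∈ Icc a₀ b₀, t' < c → |t' - c| < η →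
        f (w c) - f (w t') ≤ (M + ε) * (S c - S t') := by
      intro t' ht' hct hlt'
      have hSd : 0 < S c - S t' := by
        have := hS ht' hc₀ hct; linarith
      have h2 := hq t' ht' (ne_of_lt hct) hlt'
      have heq : (f (w t') - f (w c)) / (S t' - S c)
          = (f (w c) - f (w t')) / (S c - S t') := by
        rw [← neg_div_neg_eq]; ring_nf
      rw [heq, div_lt_iff₀ hSd] at h2
      have h3 : h (w c) ≤ M := hMb c hcIcc
      nlinarith
    -- c ∈ A
    have hcA : c ∈ A := by
      obtain ⟨t₀, ht₀A, ht₀gt⟩ := exists_lt_of_lt_csSup hAne (show c - η < c by linarith)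
      have ht₀le : t₀ ≤ c := le_csSup hAbdd ht₀A
      rcases eq_or_lt_of_le ht₀le with rfl | ht₀lt
      · exact ht₀A
      · have habs : |t₀ - c| < η := by rw [abs_sub_comm, abs_of_pos (by linarith)]; linarith
        have h4 := hdown t₀ (hsub ht₀A.1) ht₀lt habs
        have h5 := ht₀A.2
        refine ⟨hcIcc, ?_⟩
        have : (M + ε) * (S c - S t₀) + (M + ε) * (S t₀ - S u) = (M + ε) * (S c - S u) := by ring
        linarith
    -- c = v
    have hcv : c = v := by
      by_contra hne
      have hcltv : c < v := lt_of_le_of_ne hcIcc.2 hne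
      set t' := min (c + η/2) v with ht'
      have hct' : c < t' := lt_min (by linarith) hcltv
      have ht'v : t' ≤ v := min_le_right _ _
      have ht'Icc : t' ∈ Icc a₀ b₀ := hsub ⟨le_trans hcIcc.1 (le_of_lt hct'), ht'v⟩
      have habs : |t' - c| < η := by
        rw [abs_of_pos (by linarith)]
        have : t' ≤ c + η/2 := min_le_left _ _
        linarith
      have h4 := hup t' ht'Icc hct' habs
      have h5 := hcA.2
      have ht'A : t' ∈ A := by
        refine ⟨⟨le_trans hcIcc.1 (le_of_lt hct'), ht'v⟩, ?_⟩
        have : (M + ε) * (S t' - S c) + (M + ε) * (S c - S u) = (M + ε) * (S t' - S u) := by ring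
        linarith
      exact absurd (le_csSup hAbdd ht'A) (not_le.2 hct')
    rw [hcv] at hcA
    exact hcA.2
  refine le_of_forall_pos_le_add ?_
  intro ε hε
  have hε' : 0 < ε / (S v - S u + 1) := by positivity
  have h6 := key _ hε'
  have h7 : ε / (S v - S u + 1) * (S v - S u) ≤ ε := by
    rw [div_mul_eq_mul_div, div_le_iff₀ (by linarith)]
    nlinarith
  nlinarith


lemma sSup_neg_image (s : Set ℝ) (hne : s.Nonempty) (hbdd : BddBelow s) :
    sSup (Neg.neg '' s) = -sInf s := by
  have hbA : BddAbove (Neg.neg '' s) := by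
    obtain ⟨lb, hlb⟩ := hbdd
    exact ⟨-lb, by rintro x ⟨y, hy, rfl⟩; simpa using hlb hy⟩
  refine le_antisymm (csSup_le (hne.image _) ?_) ?_
  · rintro x ⟨y, hy, rfl⟩
    simpa using csInf_le hbdd hy
  · rw [neg_le]
    refine le_csInf hne fun y hy => ?_
    rw [neg_le]
    exact le_csSup hbA (Set.mem_image_of_mem _ hy)

lemma bddAbove_neg_image {s : Set ℝ} (hbdd : BddBelow s) : BddAbove (Neg.neg '' s) := by
  obtain ⟨lb, hlb⟩ := hbdd
  exact ⟨-lb, by rintro x ⟨y, hy, rfl⟩; simpa using hlb hy⟩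

lemma fal_lower {n : ℕ} {a₀ b₀ : ℝ} {w : ℝ → EuclideanSpace ℝ (Fin n)}
    (hw : ContinuousOn w (Icc a₀ b₀)) (hinj : InjOn w (Icc a₀ b₀))
    {S : ℝ → ℝ} (hS : StrictMonoOn S (Icc a₀ b₀))
    {J f h : EuclideanSpace ℝ (Fin n) → ℝ}
    (hJ : ∀ t ∈ Icc a₀ b₀, J (w t) = S t)
    {u v : ℝ} (hu : a₀ ≤ u) (huv : u ≤ v) (hv : v ≤ b₀)
    (hdiff : ∀ θ ∈ w '' Icc u v, HasFAlphaDerivAt (w '' Icc a₀ b₀) J f θ (h θ))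
    (hbdd : BddBelow (h '' (w '' Icc u v))) :
    sInf (h '' (w '' Icc u v)) * (S v - S u) ≤ f (w v) - f (w u) := by
  have hne : (h '' (w '' Icc u v)).Nonempty :=
    ⟨h (w u), mem_image_of_mem _ (mem_image_of_mem _ (left_mem_Icc.2 huv))⟩
  have hdiff' : ∀ θ ∈ w '' Icc u v,
      HasFAlphaDerivAt (w '' Icc a₀ b₀) J (fun x => -f x) θ ((fun x => -h x) θ) := by
    intro θ hθ ε hε
    obtain ⟨δ, hδ, hd⟩ := hdiff θ hθ ε hε
    refine ⟨δ, hδ, fun θ' hθ' hne' hd' => ?_⟩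
    have h1 : |(f θ' - f θ) / (J θ' - J θ) - h θ| < ε := hd θ' hθ' hne' hd'
    show |(-f θ' - -f θ) / (J θ' - J θ) - -h θ| < ε
    have heq : (-f θ' - -f θ) / (J θ' - J θ) - -h θ
        = -((f θ' - f θ) / (J θ' - J θ) - h θ) := by
      rw [show -f θ' - -f θ = -(f θ' - f θ) by ring, neg_div]; ring
    rw [heq, abs_neg]; exact h1
  have himg : (fun x => -h x) '' (w '' Icc u v) = Neg.neg '' (h '' (w '' Icc u v)) :=
    (Set.image_image Neg.neg h _).symm
  have hup := fal_upper hw hinj hS hJ hu huv hv hdiff'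
    (by rw [himg]; exact bddAbove_neg_image hbdd)
  rw [himg, sSup_neg_image _ hne hbdd, neg_mul] at hup

  linarith

/-- second fundamental theorem of F^α-calculus: if f is
F^α-differentiable on C(a,b) with F-continuous derivative h, then
∫_{C(a,b)} h dθ = f(w(b)) − f(w(a)). -/
theorem second_fundamental_theorem {n : ℕ} (hn : 1 ≤ n) {a₀ b₀ : ℝ}
    (w : ℝ → EuclideanSpace ℝ (Fin n))
    (hw : ContinuousOn w (Icc a₀ b₀)) (hinj : InjOn w (Icc a₀ b₀))
    {α : ℝ} (hα : α ∈ Icc (1 : ℝ) (n : ℝ))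
    (hfin : ∀ t ∈ Icc a₀ b₀, massFn α w a₀ t ≠ ⊤)
    (hS : StrictMonoOn (SF α w a₀) (Icc a₀ b₀))
    (J : EuclideanSpace ℝ (Fin n) → ℝ)
    (hJ : ∀ t ∈ Icc a₀ b₀, J (w t) = SF α w a₀ t)
    {a b : ℝ} (ha : a₀ ≤ a) (hab : a ≤ b) (hb : b ≤ b₀)
    (f h : EuclideanSpace ℝ (Fin n) → ℝ)
    (hdiff : ∀ θ ∈ w '' Icc a b, HasFAlphaDerivAt (w '' Icc a₀ b₀) J f θ (h θ))
    (hhc : ∀ θ ∈ w '' Icc a₀ b₀, FContinuousAt (w '' Icc a₀ b₀) h θ) :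
    HasFIntegral α w a₀ h a b (f (w b) - f (w a)) := by
  classical
  have hsubab : Icc a b ⊆ Icc a₀ b₀ := Icc_subset_Icc ha hb
  have haIcc : a ∈ Icc a₀ b₀ := ⟨ha, le_trans hab hb⟩
  have hbIcc : b ∈ Icc a₀ b₀ := ⟨le_trans ha hab, hb⟩
  set v₀ := f (w b) - f (w a) with hv₀
  have hFcpt : IsCompact (w '' Icc a₀ b₀) := isCompact_Icc.image_of_continuousOn hw
  have hcont : ContinuousOn h (w '' Icc a₀ b₀) := by
    intro θ hθ
    rw [Metric.continuousWithinAt_iff]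
    intro ε hε
    obtain ⟨δ, hδ, hd⟩ := hhc θ hθ ε hε
    refine ⟨δ, hδ, fun x hx hdx => ?_⟩
    rcases eq_or_ne x θ with rfl | hne
    · simpa using hε
    · rw [Real.dist_eq]
      exact hd x hx hne (by rwa [dist_eq_norm] at hdx)
  have hhcpt : IsCompact (h '' (w '' Icc a₀ b₀)) := hFcpt.image_of_continuousOn hcont
  have hbddA : BddAbove (h '' (w '' Icc a₀ b₀)) := hhcpt.bddAbove
  have hbddB : BddBelow (h '' (w '' Icc a₀ b₀)) := hhcpt.bddBelow
  have hPt : ∀ (P : Subdivision a b), ∀ i ≤ P.k, P.t i ∈ Icc a b := by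
    intro P i hi
    constructor
    · have h1 := subdivision_t_le P (Nat.zero_le i) hi
      rw [P.first] at h1; exact h1
    · have h1 := subdivision_t_le P hi le_rfl
      rw [P.last] at h1; exact h1
  have hUv : ∀ P : Subdivision a b, v₀ ≤ upperFSum α w a₀ h P := by
    intro P
    have htel : ∑ i ∈ Finset.range P.k, (f (w (P.t (i+1))) - f (w (P.t i))) = v₀ := by
      rw [Finset.sum_range_sub (fun i => f (w (P.t i))), P.first, P.last]
    rw [← htel]
    unfold upperFSum
    apply Finset.sum_le_sum
    intro i hi
    rw [Finset.mem_range] at hi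
    have h1 := hPt P i (le_of_lt hi)
    have h2 := hPt P (i+1) hi
    exact fal_upper hw hinj hS hJ (le_trans ha h1.1) (le_of_lt (P.mono i hi))
      (le_trans h2.2 hb)
      (fun θ hθ => hdiff θ (image_mono (f := w) (Icc_subset_Icc h1.1 h2.2) hθ))
      (hbddA.mono (image_mono (f := h) (image_mono (f := w)
        (Icc_subset_Icc (le_trans ha h1.1) (le_trans h2.2 hb)))))
  have hLv : ∀ P : Subdivision a b, lowerFSum α w a₀ h P ≤ v₀ := by
    intro P
    have htel : ∑ i ∈ Finset.range P.k, (f (w (P.t (i+1))) - f (w (P.t i))) = v₀ := by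
      rw [Finset.sum_range_sub (fun i => f (w (P.t i))), P.first, P.last]
    rw [← htel]
    unfold lowerFSum
    apply Finset.sum_le_sum
    intro i hi
    rw [Finset.mem_range] at hi
    have h1 := hPt P i (le_of_lt hi)
    have h2 := hPt P (i+1) hi
    exact fal_lower hw hinj hS hJ (le_trans ha h1.1) (le_of_lt (P.mono i hi))
      (le_trans h2.2 hb)
      (fun θ hθ => hdiff θ (image_mono (f := w) (Icc_subset_Icc h1.1 h2.2) hθ))
      (hbddB.mono (image_mono (f := h) (image_mono (f := w)
        (Icc_subset_Icc (le_trans ha h1.1) (le_trans h2.2 hb)))))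
  haveI hPex : Nonempty (Subdivision a b) := by
    rcases eq_or_lt_of_le hab with rfl | hlt
    · exact ⟨⟨0, fun _ => a, rfl, rfl, by omega⟩⟩
    · refine ⟨⟨1, fun i => if i = 0 then a else b, by simp, by simp, ?_⟩⟩
      intro i hi
      have : i = 0 := by omega
      subst this
      simpa using hlt
  -- fine subdivisions give small gap
  have gap : ∀ ε > (0:ℝ), ∃ P : Subdivision a b,
      upperFSum α w a₀ h P ≤ v₀ + ε ∧ v₀ - ε ≤ lowerFSum α w a₀ h P := by
    intro ε hε
    rcases eq_or_lt_of_le hab with rfl | hlt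
    · refine ⟨⟨0, fun _ => a, rfl, rfl, by omega⟩, ?_, ?_⟩
      · unfold upperFSum; simp; linarith
      · unfold lowerFSum; simp; linarith
    · set D := SF α w a₀ b - SF α w a₀ a with hD
      have hD0 : 0 ≤ D := by
        have := hS.monotoneOn haIcc hbIcc hab
        simp only [hD]; linarith
      set ε' := ε / (D + 1) with hε'def
      have hε' : 0 < ε' := by positivity
      obtain ⟨δ₁, hδ₁, hu1⟩ := Metric.uniformContinuousOn_iff.mp
        (hFcpt.uniformContinuousOn_of_continuous hcont) ε' hε'
      obtain ⟨δ₂, hδ₂, hu2⟩ := Metric.uniformContinuousOn_iff.mp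
        (isCompact_Icc.uniformContinuousOn_of_continuous hw) δ₁ hδ₁
      -- construct a uniform subdivision with mesh < δ₂
      obtain ⟨N, hNgt⟩ : ∃ N : ℕ, (b-a)/δ₂ < (N:ℝ) := by
        refine ⟨⌈(b-a)/δ₂⌉₊ + 1, ?_⟩
        push_cast
        have h1 : (b-a)/δ₂ ≤ (⌈(b-a)/δ₂⌉₊ : ℝ) := Nat.le_ceil _
        linarith
      have hNR : (0:ℝ) < (N:ℝ) := lt_of_le_of_lt (div_nonneg (by linarith) (le_of_lt hδ₂)) hNgt
      have hq : 0 < (b-a)/(N:ℝ) := div_pos (by linarith) hNR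
      have hmesh : (b-a)/(N:ℝ) < δ₂ := by
        rw [div_lt_iff₀ hNR]
        calc b - a = (b-a)/δ₂ * δ₂ := by field_simp
          _ < (N:ℝ) * δ₂ := mul_lt_mul_of_pos_right hNgt hδ₂
          _ = δ₂ * (N:ℝ) := by ring
      have hNne : ((N:ℝ)) ≠ 0 := ne_of_gt hNR
      set P : Subdivision a b := ⟨N, fun i => a + ((min i N : ℕ) : ℝ) * ((b-a)/(N:ℝ)),
        by simp,
        by show a + ((min N N : ℕ) : ℝ) * ((b-a)/(N:ℝ)) = b
           rw [min_self]; field_simp; ring,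
        by
          intro i hi
          have h1 : min i N = i := min_eq_left (le_of_lt hi)
          have h2 : min (i+1) N = i+1 := min_eq_left hi
          show a + ((min i N : ℕ) : ℝ) * ((b-a)/(N:ℝ))
            < a + ((min (i+1) N : ℕ) : ℝ) * ((b-a)/(N:ℝ))
          rw [h1, h2]
          have h3 : (((i+1:ℕ)):ℝ) * ((b-a)/(N:ℝ)) - ((i:ℝ)) * ((b-a)/(N:ℝ)) = (b-a)/(N:ℝ) := by
            push_cast; ring
          linarith⟩ with hP
      have hPk : P.k = N := rfl
      have hPmesh : ∀ i < P.k, P.t (i+1) - P.t i < δ₂ := by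
        intro i hi
        rw [hPk] at hi
        show (a + ((min (i+1) N : ℕ) : ℝ) * ((b-a)/(N:ℝ)))
          - (a + ((min i N : ℕ) : ℝ) * ((b-a)/(N:ℝ))) < δ₂
        rw [min_eq_left (le_of_lt hi), min_eq_left hi]
        have h3 : (((i+1:ℕ)):ℝ) * ((b-a)/(N:ℝ)) - ((i:ℝ)) * ((b-a)/(N:ℝ)) = (b-a)/(N:ℝ) := by
          push_cast; ring
        linarith
      -- oscillation bound on each piece
      have hosc : ∀ i < P.k,
          sSup (h '' (w '' Icc (P.t i) (P.t (i+1))))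
            ≤ sInf (h '' (w '' Icc (P.t i) (P.t (i+1)))) + ε' := by
        intro i hi
        have hti := hPt P i (le_of_lt hi)
        have hti1 := hPt P (i+1) hi
        have htle : P.t i ≤ P.t (i+1) := le_of_lt (P.mono i hi)
        have hIccsub : Icc (P.t i) (P.t (i+1)) ⊆ Icc a₀ b₀ :=
          Icc_subset_Icc (le_trans ha hti.1) (le_trans hti1.2 hb)
        have hCne : (h '' (w '' Icc (P.t i) (P.t (i+1)))).Nonempty :=
          ⟨h (w (P.t i)), mem_image_of_mem _ (mem_image_of_mem _ (left_mem_Icc.2 htle))⟩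
        have hpair : ∀ x ∈ h '' (w '' Icc (P.t i) (P.t (i+1))),
            ∀ y ∈ h '' (w '' Icc (P.t i) (P.t (i+1))), x - y < ε' := by
          rintro x ⟨θx, ⟨s, hs, rfl⟩, rfl⟩ y ⟨θy, ⟨s', hs', rfl⟩, rfl⟩
          have hds : dist s s' < δ₂ := by
            rw [Real.dist_eq, abs_sub_lt_iff]
            have := hPmesh i hi
            constructor <;> [skip; skip] <;>
              · obtain ⟨hs1, hs2⟩ := hs; obtain ⟨hs'1, hs'2⟩ := hs'
                linarith
          have hdw : dist (w s) (w s') < δ₁ := hu2 s (hIccsub hs) s' (hIccsub hs') hds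
          have hdh : dist (h (w s)) (h (w s')) < ε' :=
            hu1 (w s) (mem_image_of_mem _ (hIccsub hs))
              (w s') (mem_image_of_mem _ (hIccsub hs')) hdw
          rw [Real.dist_eq] at hdh
          exact lt_of_le_of_lt (le_abs_self _) hdh
        refine csSup_le hCne fun x hx => ?_
        have hxle : x - ε' ≤ sInf (h '' (w '' Icc (P.t i) (P.t (i+1)))) :=
          le_csInf hCne fun y hy => by linarith [hpair x hx y hy]
        linarith
      -- sum the gap
      have hΔS : ∀ i < P.k, 0 ≤ SF α w a₀ (P.t (i+1)) - SF α w a₀ (P.t i) := by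
        intro i hi
        have hti := hPt P i (le_of_lt hi)
        have hti1 := hPt P (i+1) hi
        have := hS.monotoneOn (hsubab hti) (hsubab hti1) (le_of_lt (P.mono i hi))
        linarith
      have hsum : upperFSum α w a₀ h P - lowerFSum α w a₀ h P ≤ ε' * D := by
        unfold upperFSum lowerFSum
        rw [← Finset.sum_sub_distrib]
        have hterm : ∀ i ∈ Finset.range P.k,
            sSup (h '' (w '' Icc (P.t i) (P.t (i+1)))) *
                (SF α w a₀ (P.t (i+1)) - SF α w a₀ (P.t i))
              - sInf (h '' (w '' Icc (P.t i) (P.t (i+1)))) *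
                (SF α w a₀ (P.t (i+1)) - SF α w a₀ (P.t i))
              ≤ ε' * (SF α w a₀ (P.t (i+1)) - SF α w a₀ (P.t i)) := by
          intro i hi
          rw [Finset.mem_range] at hi
          have h1 := hosc i hi
          have h2 := hΔS i hi
          nlinarith
        calc ∑ i ∈ Finset.range P.k, (sSup (h '' (w '' Icc (P.t i) (P.t (i+1)))) *
                (SF α w a₀ (P.t (i+1)) - SF α w a₀ (P.t i))
              - sInf (h '' (w '' Icc (P.t i) (P.t (i+1)))) *
                (SF α w a₀ (P.t (i+1)) - SF α w a₀ (P.t i)))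
            ≤ ∑ i ∈ Finset.range P.k,
                ε' * (SF α w a₀ (P.t (i+1)) - SF α w a₀ (P.t i)) :=
              Finset.sum_le_sum hterm
          _ = ε' * ∑ i ∈ Finset.range P.k,
                (SF α w a₀ (P.t (i+1)) - SF α w a₀ (P.t i)) := by
              rw [Finset.mul_sum]
          _ = ε' * D := by
              rw [Finset.sum_range_sub (fun i => SF α w a₀ (P.t i)), P.first, P.last]
      have hε'D : ε' * D ≤ ε := by
        rw [hε'def, div_mul_eq_mul_div, div_le_iff₀ (by linarith)]
        nlinarith
      exact ⟨P, by linarith [hLv P, hsum], by linarith [hUv P, hsum]⟩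
  constructor
  · refine le_antisymm ?_ (le_csInf (Set.range_nonempty _)
      (by rintro x ⟨P, rfl⟩; exact hUv P))
    have hbdd : BddBelow (Set.range fun P : Subdivision a b => upperFSum α w a₀ h P) :=
      ⟨v₀, by rintro x ⟨P, rfl⟩; exact hUv P⟩
    refine le_of_forall_pos_le_add fun ε hε => ?_
    obtain ⟨P, hP, _⟩ := gap ε hε
    exact le_trans (csInf_le hbdd ⟨P, rfl⟩) hP
  · have hbdd : BddAbove (Set.range fun P : Subdivision a b => lowerFSum α w a₀ h P) :=
      ⟨v₀, by rintro x ⟨P, rfl⟩; exact hLv P⟩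
    refine le_antisymm (csSup_le (Set.range_nonempty _)
      (by rintro x ⟨P, rfl⟩; exact hLv P)) ?_
    refine le_of_forall_pos_le_add fun ε hε => ?_
    obtain ⟨P, _, hP⟩ := gap ε hε
    have := le_csSup hbdd (⟨P, rfl⟩ :
      lowerFSum α w a₀ h P ∈ Set.range fun P : Subdivision a b => lowerFSum α w a₀ h P)
    linarith
end
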